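/- arXiv:1307.5333 — 2 statements merged into one kernel-verified Lean document; each statement's English description precedes it below -/
import Mathlib

section
/- With notation and hypotheses as in the context, |𝒟₀| ≤ C·T^{1+ε}·K₁·K₂·∑_{μ≠0} |a(μ)|², where the constant C depends only on ε, η, c and C₀. -/
/- Statement 4: the elementary bound (1.33) for the diagonal term 𝒟₀. -/

noncomputable section
open Complex Real
open scoped Classical

/-- The Gaussian integers. -/
abbrev Gi := GaussianInt

/-- Embedding of the Gaussian integers into `ℂ`. -/
def gc (α : Gi) : ℂ := GaussianInt.toComplex α

/-- `|α|²`, the norm of a Gaussian integer. -/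
def gnorm (α : Gi) : ℝ := ‖gc α‖ ^ 2

/-- The coefficients `C(ξ)` of (1.21). -/
def Cfun (w₁ w₂ : ℝ → ℂ) (a : Gi → ℂ) (ξ : Gi) : ℂ :=
  ∑' p : Gi × Gi × Gi, if p.1 * p.2.1 * p.2.2 = ξ then
    w₁ (gnorm p.1) * w₂ (gnorm p.2.1) * a p.2.2 else 0

/-- The diagonal term `𝒟₀` of (1.22). -/
def D0 (T : ℝ) (w₀ w₁ w₂ : ℝ → ℂ) (a : Gi → ℂ) : ℂ :=
  (Real.pi : ℂ) * (∫ x in Set.Ioi (0 : ℝ), w₀ x) * (T : ℂ) *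
    ∑' ξ : Gi, if ξ ≠ 0 then ((‖Cfun w₁ w₂ a ξ‖ ^ 2 : ℝ) : ℂ) else 0

/-- Boundedness and support hypotheses on a weight function. -/
def WBdd (η K C₀ : ℝ) (w : ℝ → ℂ) : Prop :=
  ∀ x : ℝ, 0 < x →
    (Real.exp (-η) * K ≤ x ∧ x ≤ Real.exp η * K → ‖w x‖ ≤ C₀) ∧
    (¬(Real.exp (-η) * K ≤ x ∧ x ≤ Real.exp η * K) → w x = 0)


open MeasureTheory

lemma gnorm_eq_norm (z : Gi) : gnorm z = (z.norm : ℝ) := by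
  rw [gnorm, Complex.sq_norm, gc, GaussianInt.intCast_real_norm]

lemma gnorm_nonneg (z : Gi) : 0 ≤ gnorm z := sq_nonneg _

lemma gnorm_mul (x y : Gi) : gnorm (x * y) = gnorm x * gnorm y := by
  simp [gnorm, gc, map_mul, mul_pow]

lemma gnorm_one : gnorm 1 = 1 := by simp [gnorm, gc, map_one]

lemma gnorm_zero : gnorm 0 = 0 := by simp [gnorm, gc, map_zero]

lemma one_le_gnorm {z : Gi} (hz : z ≠ 0) : 1 ≤ gnorm z := by
  have hne : gc z ≠ 0 := by simpa [gc, GaussianInt.toComplex_eq_zero] using hz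
  have h0 : (0:ℝ) < (z.norm : ℝ) := by
    rw [GaussianInt.intCast_real_norm]
    exact Complex.normSq_pos.mpr hne
  have h1 : (0:ℤ) < z.norm := by exact_mod_cast h0
  rw [gnorm_eq_norm]
  exact_mod_cast h1

lemma gnorm_pos {z : Gi} (hz : z ≠ 0) : 0 < gnorm z :=
  lt_of_lt_of_le one_pos (one_le_gnorm hz)

lemma gnorm_unit (u : Giˣ) : gnorm (u : Gi) = 1 := by
  rw [gnorm_eq_norm]
  have := (Zsqrtd.norm_eq_one_iff' (by norm_num) (u : Gi)).mpr u.isUnit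
  rw [this]; norm_num

lemma two_le_gnorm_of_prime {z : Gi} (hz : Prime z) : 2 ≤ gnorm z := by
  have h1 : 1 ≤ z.norm := by
    have := one_le_gnorm hz.ne_zero
    rw [gnorm_eq_norm] at this; exact_mod_cast this
  have h2 : z.norm ≠ 1 := fun h =>
    hz.not_unit ((Zsqrtd.norm_eq_one_iff' (by norm_num) z).mp h)
  rw [gnorm_eq_norm]
  have : 2 ≤ z.norm := by omega
  exact_mod_cast this

def gnormHom : Gi →* ℝ where
  toFun := gnorm
  map_one' := gnorm_one
  map_mul' := gnorm_mul

def ballF (R : ℝ) : Finset Gi :=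
  ((Finset.Icc (-(⌈Real.sqrt R⌉)) ⌈Real.sqrt R⌉) ×ˢ
    (Finset.Icc (-(⌈Real.sqrt R⌉)) ⌈Real.sqrt R⌉)).image fun p => (⟨p.1, p.2⟩ : Gi)

lemma gnorm_coords (z : Gi) : gnorm z = (z.re : ℝ)^2 + (z.im : ℝ)^2 := by
  rw [gnorm_eq_norm, Zsqrtd.norm]
  push_cast
  ring

lemma coord_bound {R x : ℝ} (h : x^2 ≤ R) : -(⌈Real.sqrt R⌉ : ℝ) ≤ x ∧ x ≤ (⌈Real.sqrt R⌉ : ℝ) := by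
  have habs : |x| ≤ Real.sqrt R := Real.abs_le_sqrt h
  have hc : Real.sqrt R ≤ (⌈Real.sqrt R⌉ : ℝ) := Int.le_ceil _
  rw [abs_le] at habs
  constructor <;> nlinarith

lemma mem_ballF {R : ℝ} {z : Gi} (h : gnorm z ≤ R) : z ∈ ballF R := by
  rw [ballF, Finset.mem_image]
  refine ⟨(z.re, z.im), ?_, rfl⟩
  rw [Finset.mem_product]
  have hco := gnorm_coords z
  have h1 : ((z.re:ℝ))^2 ≤ R := by nlinarith [sq_nonneg ((z.im:ℝ))]
  have h2 : ((z.im:ℝ))^2 ≤ R := by nlinarith [sq_nonneg ((z.re:ℝ))]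
  obtain ⟨a1, b1⟩ := coord_bound h1
  obtain ⟨a2, b2⟩ := coord_bound h2
  constructor
  · rw [Finset.mem_Icc]
    exact ⟨by exact_mod_cast a1, by exact_mod_cast b1⟩
  · rw [Finset.mem_Icc]
    exact ⟨by exact_mod_cast a2, by exact_mod_cast b2⟩

lemma card_ballF_le {R : ℝ} (hR : 1 ≤ R) : ((ballF R).card : ℝ) ≤ 25 * R := by
  have hs : (1:ℝ) ≤ Real.sqrt R := by
    rw [show (1:ℝ) = Real.sqrt 1 by simp]
    exact Real.sqrt_le_sqrt hR
  set n : ℤ := ⌈Real.sqrt R⌉ with hn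
  have hn1 : (1:ℤ) ≤ n := by
    have := Int.le_ceil (Real.sqrt R)
    exact_mod_cast Int.ceil_le_ceil hs |>.trans_eq' (by norm_num)
  have hcard : ((Finset.Icc (-n) n).card : ℝ) ≤ 5 * Real.sqrt R := by
    have hcc : (Finset.Icc (-n) n).card = (2*n+1).toNat := by
      rw [Int.card_Icc]; congr 1; ring
    rw [hcc]
    have h2 : ((2*n+1).toNat : ℝ) = ((2*n+1 : ℤ) : ℝ) := by
      exact_mod_cast congrArg (Int.cast : ℤ → ℝ) (Int.toNat_of_nonneg (show (0:ℤ) ≤ 2*n+1 by omega))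
    rw [h2]
    have hnr : (n : ℝ) ≤ Real.sqrt R + 1 := le_of_lt (Int.ceil_lt_add_one _)
    push_cast
    nlinarith
  have hb : ((ballF R).card : ℝ) ≤ (((Finset.Icc (-n) n) ×ˢ (Finset.Icc (-n) n)).card : ℝ) := by
    exact_mod_cast Finset.card_image_le
  rw [Finset.card_product] at hb
  push_cast at hb
  have hsq : Real.sqrt R * Real.sqrt R = R := Real.mul_self_sqrt (by linarith)
  nlinarith [Real.sqrt_nonneg R]

lemma keyfac (ε' : ℝ) (hε' : 0 < ε') {q : ℝ} (hq : 2 ≤ q) (a : ℕ) :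
    (a + 1 : ℝ) ≤ (if q < 2 ^ (1/ε') then ((⌈1/ε'⌉₊ : ℝ) + 1) else 1) * (q ^ a) ^ ε' := by
  have hq0 : (0:ℝ) ≤ q := by linarith
  have hpow : ((q ^ a : ℝ)) ^ ε' = q ^ ((a:ℝ) * ε') := by
    rw [← Real.rpow_natCast q a, ← Real.rpow_mul hq0]
  rw [hpow]
  by_cases hlt : q < 2 ^ (1/ε')
  · rw [if_pos hlt]
    set m : ℕ := ⌈1/ε'⌉₊ with hm
    have hm1 : 1 ≤ m := Nat.one_le_ceil_iff.mpr (by positivity)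
    set k : ℕ := a / m with hk
    have hnat : a + 1 ≤ (m + 1) * 2 ^ k := by
      have hmod : m * k + a % m = a := Nat.div_add_mod a m
      have hltm : a % m < m := Nat.mod_lt _ (by omega)
      have h2 : k + 1 ≤ 2 ^ k := Nat.lt_two_pow_self
      calc a + 1 ≤ m * k + m := by omega
        _ = m * (k + 1) := by ring
        _ ≤ m * 2 ^ k := Nat.mul_le_mul_left m h2
        _ ≤ (m + 1) * 2 ^ k := Nat.mul_le_mul_right _ (by omega)
    have hstep1 : (a + 1 : ℝ) ≤ ((m:ℝ) + 1) * (2:ℝ) ^ (k:ℕ) := by exact_mod_cast hnat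
    have hexp : (k : ℝ) ≤ (a:ℝ) * ε' := by
      have h1 : ((k:ℕ) : ℝ) ≤ (a : ℝ) / (m : ℝ) := Nat.cast_div_le
      have hmε : 1 ≤ ε' * (m : ℝ) := by
        have := Nat.le_ceil (1/ε')
        calc (1:ℝ) = ε' * (1/ε') := by field_simp
          _ ≤ ε' * m := by
            exact mul_le_mul_of_nonneg_left (by exact_mod_cast this) (le_of_lt hε')
      have hm0 : (0:ℝ) < m := by exact_mod_cast hm1
      calc (k:ℝ) ≤ (a:ℝ)/(m:ℝ) := Nat.cast_div_le
          _ ≤ (a:ℝ) * ε' := by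
            rw [div_le_iff₀ hm0]
            calc (a:ℝ) = a * 1 := by ring
              _ ≤ a * (ε' * m) := by
                exact mul_le_mul_of_nonneg_left hmε (Nat.cast_nonneg a)
              _ = a * ε' * m := by ring
    have hstep2 : (2:ℝ) ^ (k:ℕ) ≤ q ^ ((a:ℝ) * ε') := by
      calc (2:ℝ) ^ (k:ℕ) = (2:ℝ) ^ ((k:ℕ):ℝ) := by rw [Real.rpow_natCast]
        _ ≤ (2:ℝ) ^ ((a:ℝ) * ε') := Real.rpow_le_rpow_of_exponent_le one_le_two hexp
        _ ≤ q ^ ((a:ℝ) * ε') := Real.rpow_le_rpow (by norm_num) hq (by positivity)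
    calc (a + 1 : ℝ) ≤ ((m:ℝ) + 1) * (2:ℝ) ^ (k:ℕ) := hstep1
      _ ≤ ((m:ℝ) + 1) * q ^ ((a:ℝ) * ε') := by
        exact mul_le_mul_of_nonneg_left hstep2 (by positivity)
  · rw [if_neg hlt, one_mul]
    push_neg at hlt
    have h1 : ((2:ℝ) ^ (1/ε')) ^ ((a:ℝ) * ε') ≤ q ^ ((a:ℝ) * ε') :=
      Real.rpow_le_rpow (by positivity) hlt (by positivity)
    have h2 : ((2:ℝ) ^ (1/ε')) ^ ((a:ℝ) * ε') = (2:ℝ) ^ (a:ℝ) := by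
      rw [← Real.rpow_mul (by norm_num)]
      congr 1
      field_simp
    have h3 : (a + 1 : ℝ) ≤ (2:ℝ) ^ (a:ℝ) := by
      rw [Real.rpow_natCast]
      exact_mod_cast Nat.lt_two_pow_self
    linarith

noncomputable instance : NormalizationMonoid Gi := UniqueFactorizationMonoid.normalizationMonoid.toNormalizationMonoid

def divF (ξ : Gi) : Finset Gi := (ballF (gnorm ξ)).filter (fun d => d ∣ ξ)

lemma mem_divF {ξ d : Gi} (hξ : ξ ≠ 0) (hd : d ∣ ξ) : d ∈ divF ξ := by
  obtain ⟨e, he⟩ := hd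
  have he0 : e ≠ 0 := by rintro rfl; rw [mul_zero] at he; exact hξ he
  have hgn : gnorm d ≤ gnorm ξ := by
    rw [he, gnorm_mul]
    nlinarith [one_le_gnorm he0, gnorm_nonneg d]
  exact Finset.mem_filter.mpr ⟨mem_ballF hgn, ⟨e, he⟩⟩

open UniqueFactorizationMonoid in
lemma card_divF_le (ξ : Gi) (hξ : ξ ≠ 0) :
    (divF ξ).card ≤ 25 * ∏ pp ∈ (normalizedFactors ξ).toFinset,
      ((normalizedFactors ξ).count pp + 1) := by
  classical
  set s := normalizedFactors ξ with hs
  have hb25 : (ballF 1).card ≤ 25 := by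
    have h := card_ballF_le (le_refl (1:ℝ))
    have : ((ballF 1).card : ℝ) ≤ 25 := by linarith
    exact_mod_cast this
  have key : (divF ξ).card ≤
      ((ballF 1) ×ˢ (s.toFinset.pi fun pp => Finset.range (s.count pp + 1))).card := by
    apply Finset.card_le_card_of_injOn
      (fun d => (d / (normalizedFactors d).prod, fun pp _ => (normalizedFactors d).count pp))
    · intro d hd
      rw [divF, Finset.mem_coe, Finset.mem_filter] at hd
      obtain ⟨hball, hdvd⟩ := hd
      have hd0 : d ≠ 0 := fun h => hξ (zero_dvd_iff.mp (h ▸ hdvd))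
      obtain ⟨u, hu⟩ := prod_normalizedFactors hd0
      have hp0 : (normalizedFactors d).prod ≠ 0 := fun h => by
        rw [h, zero_mul] at hu; exact hd0 hu.symm
      have hquot : d / (normalizedFactors d).prod = (u : Gi) := by
        have h1 : (normalizedFactors d).prod * (d / (normalizedFactors d).prod) = d :=
          EuclideanDomain.mul_div_cancel' hp0 (Dvd.intro _ hu)
        have h2 : (normalizedFactors d).prod * (d / (normalizedFactors d).prod)
            = (normalizedFactors d).prod * (u : Gi) := by rw [h1]; exact hu.symm
        exact mul_left_cancel₀ hp0 h2
      rw [Finset.mem_coe, Finset.mem_product]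
      refine ⟨mem_ballF (by dsimp only; rw [hquot, gnorm_unit]), ?_⟩
      rw [Finset.mem_pi]
      intro pp hpp
      rw [Finset.mem_range, Nat.lt_succ_iff]
      exact Multiset.count_le_of_le pp
        ((dvd_iff_normalizedFactors_le_normalizedFactors hd0 hξ).mp hdvd)
    · intro d hd d' hd' heq
      simp only [Finset.coe_filter, Set.mem_setOf_eq, divF, Finset.mem_coe,
        Finset.mem_filter] at hd hd'
      have hd0 : d ≠ 0 := fun h => hξ (zero_dvd_iff.mp (h ▸ hd.2))
      have hd0' : d' ≠ 0 := fun h => hξ (zero_dvd_iff.mp (h ▸ hd'.2))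
      have heq1 : d / (normalizedFactors d).prod = d' / (normalizedFactors d').prod :=
        (Prod.ext_iff.mp heq).1
      have heq2 : (fun pp (_ : pp ∈ s.toFinset) => (normalizedFactors d).count pp)
          = (fun pp (_ : pp ∈ s.toFinset) => (normalizedFactors d').count pp) :=
        (Prod.ext_iff.mp heq).2
      have hle : normalizedFactors d ≤ s :=
        (dvd_iff_normalizedFactors_le_normalizedFactors hd0 hξ).mp hd.2
      have hle' : normalizedFactors d' ≤ s :=
        (dvd_iff_normalizedFactors_le_normalizedFactors hd0' hξ).mp hd'.2
      have hcnt : normalizedFactors d = normalizedFactors d' := by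
        ext pp
        by_cases hpp : pp ∈ s.toFinset
        · exact congrFun (congrFun heq2 pp) hpp
        · have h0 : s.count pp = 0 := by
            rw [Multiset.count_eq_zero]
            exact fun hmem => hpp (Multiset.mem_toFinset.mpr hmem)
          have h1 := Multiset.count_le_of_le pp hle
          have h2 := Multiset.count_le_of_le pp hle'
          omega
      have hq1 : (normalizedFactors d).prod * (d / (normalizedFactors d).prod) = d := by
        obtain ⟨u, hu⟩ := prod_normalizedFactors hd0
        exact EuclideanDomain.mul_div_cancel'
          (fun h => by rw [h, zero_mul] at hu; exact hd0 hu.symm) (Dvd.intro _ hu)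
      have hq2 : (normalizedFactors d').prod * (d' / (normalizedFactors d').prod) = d' := by
        obtain ⟨u, hu⟩ := prod_normalizedFactors hd0'
        exact EuclideanDomain.mul_div_cancel'
          (fun h => by rw [h, zero_mul] at hu; exact hd0' hu.symm) (Dvd.intro _ hu)
      calc d = (normalizedFactors d).prod * (d / (normalizedFactors d).prod) := hq1.symm
        _ = (normalizedFactors d).prod * (d' / (normalizedFactors d').prod) := by rw [heq1]
        _ = (normalizedFactors d').prod * (d' / (normalizedFactors d').prod) := by rw [hcnt]
        _ = d' := hq2
  calc (divF ξ).card ≤ _ := key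
    _ = (ballF 1).card * ∏ pp ∈ s.toFinset, (s.count pp + 1) := by
        rw [Finset.card_product, Finset.card_pi]
        congr 1
        exact Finset.prod_congr rfl fun pp _ => Finset.card_range _
    _ ≤ 25 * ∏ pp ∈ s.toFinset, (s.count pp + 1) :=
        Nat.mul_le_mul_right _ hb25

open UniqueFactorizationMonoid in
lemma gnorm_eq_prod_factors (ξ : Gi) (hξ : ξ ≠ 0) :
    gnorm ξ = ∏ pp ∈ (normalizedFactors ξ).toFinset,
      gnorm pp ^ ((normalizedFactors ξ).count pp) := by
  obtain ⟨u, hu⟩ := prod_normalizedFactors hξ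
  have h1 : gnorm ξ = gnorm (normalizedFactors ξ).prod := by
    conv_lhs => rw [← hu]
    rw [gnorm_mul, gnorm_unit, mul_one]
  have h2 : gnorm (normalizedFactors ξ).prod = ((normalizedFactors ξ).map gnorm).prod :=
    ((normalizedFactors ξ).prod_hom gnormHom).symm
  rw [h1, h2]
  exact Finset.prod_multiset_map_count _ _

open UniqueFactorizationMonoid in
lemma divisor_bound (ε' : ℝ) (hε' : 0 < ε') :
    ∃ Cd : ℝ, 1 ≤ Cd ∧ ∀ ξ : Gi, ξ ≠ 0 →
      ((divF ξ).card : ℝ) ≤ Cd * (gnorm ξ) ^ ε' := by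
  classical
  set B : ℝ := (⌈1/ε'⌉₊ : ℝ) + 1 with hB
  have hB1 : (1:ℝ) ≤ B := by
    rw [hB]
    have : (0:ℝ) ≤ (⌈1/ε'⌉₊ : ℝ) := Nat.cast_nonneg _
    linarith
  set N : ℕ := (ballF (max ((2:ℝ) ^ (1/ε')) 1)).card with hN
  have hBN1 : (1:ℝ) ≤ B ^ N := one_le_pow₀ hB1
  refine ⟨25 * B ^ N, by nlinarith, ?_⟩
  intro ξ hξ
  set s := normalizedFactors ξ with hs
  have hcast : ((divF ξ).card : ℝ) ≤ 25 * ∏ pp ∈ s.toFinset, ((s.count pp : ℝ) + 1) := by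
    have hcard := card_divF_le ξ hξ
    calc ((divF ξ).card : ℝ)
        ≤ ((25 * ∏ pp ∈ s.toFinset, (s.count pp + 1) : ℕ) : ℝ) := by exact_mod_cast hcard
      _ = 25 * ∏ pp ∈ s.toFinset, ((s.count pp : ℝ) + 1) := by push_cast; ring
  have hfac : ∀ pp ∈ s.toFinset, ((s.count pp : ℝ) + 1) ≤
      (if gnorm pp < 2 ^ (1/ε') then B else 1) * ((gnorm pp ^ (s.count pp) : ℝ)) ^ ε' := by
    intro pp hpp
    exact keyfac ε' hε'
      (two_le_gnorm_of_prime (prime_of_normalized_factor pp (Multiset.mem_toFinset.mp hpp))) _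
  have hprodle : ∏ pp ∈ s.toFinset, ((s.count pp : ℝ) + 1) ≤
      (∏ pp ∈ s.toFinset, (if gnorm pp < 2 ^ (1/ε') then B else 1)) *
      ∏ pp ∈ s.toFinset, ((gnorm pp ^ (s.count pp) : ℝ)) ^ ε' := by
    rw [← Finset.prod_mul_distrib]
    exact Finset.prod_le_prod (fun pp _ => by positivity) hfac
  have hw : ∏ pp ∈ s.toFinset, (if gnorm pp < 2 ^ (1/ε') then B else 1) ≤ B ^ N := by
    rw [Finset.prod_ite, Finset.prod_const, Finset.prod_const, one_pow, mul_one]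
    apply pow_le_pow_right₀ hB1
    apply Finset.card_le_card
    intro pp hpp
    simp only [Finset.mem_filter] at hpp
    exact mem_ballF (le_max_of_le_left (le_of_lt hpp.2))
  have hrp : ∏ pp ∈ s.toFinset, ((gnorm pp ^ (s.count pp) : ℝ)) ^ ε' = (gnorm ξ) ^ ε' := by
    rw [Real.finset_prod_rpow _ _ (fun pp _ => pow_nonneg (gnorm_nonneg pp) _) ε',
      ← gnorm_eq_prod_factors ξ hξ]
  have hrpnn : (0:ℝ) ≤ (gnorm ξ) ^ ε' := Real.rpow_nonneg (gnorm_nonneg ξ) _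
  have hwnn : (0:ℝ) ≤ ∏ pp ∈ s.toFinset, (if gnorm pp < 2 ^ (1/ε') then B else 1) :=
    Finset.prod_nonneg fun pp _ => by split <;> linarith
  calc ((divF ξ).card : ℝ) ≤ 25 * ∏ pp ∈ s.toFinset, ((s.count pp : ℝ) + 1) := hcast
    _ ≤ 25 * ((∏ pp ∈ s.toFinset, (if gnorm pp < 2 ^ (1/ε') then B else 1)) *
        ∏ pp ∈ s.toFinset, ((gnorm pp ^ (s.count pp) : ℝ)) ^ ε') := by linarith
    _ = 25 * ((∏ pp ∈ s.toFinset, (if gnorm pp < 2 ^ (1/ε') then B else 1)) * (gnorm ξ) ^ ε') := by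
        rw [hrp]
    _ ≤ 25 * (B ^ N * (gnorm ξ) ^ ε') := by nlinarith
    _ = 25 * B ^ N * (gnorm ξ) ^ ε' := by ring

/-- Lattice points in window facts. -/

lemma wfacts {η K C₀ : ℝ} {w : ℝ → ℂ} (hw : WBdd η K C₀ w) (hη2 : Real.exp η ≤ 2)
    (hK : 1 ≤ K) {κ : Gi} (hκ : κ ≠ 0) (hwκ : w (gnorm κ) ≠ 0) :
    gnorm κ ≤ 2 * K ∧ ‖w (gnorm κ)‖ ≤ C₀ := by
  have hpos := gnorm_pos hκ
  obtain ⟨h1, h2⟩ := hw (gnorm κ) hpos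
  by_cases hwin : Real.exp (-η) * K ≤ gnorm κ ∧ gnorm κ ≤ Real.exp η * K
  · exact ⟨by nlinarith [hwin.2], h1 hwin⟩
  · exact absurd (h2 hwin) hwκ

/-- Cauchy–Schwarz for a complex-valued finite sum. -/
lemma cs_finset {ι : Type*} (s : Finset ι) (f : ι → ℂ) :
    ‖∑ i ∈ s, f i‖ ^ 2 ≤ (s.card : ℝ) * ∑ i ∈ s, ‖f i‖ ^ 2 := by
  have h1 : ‖∑ i ∈ s, f i‖ ≤ ∑ i ∈ s, ‖f i‖ := by
    simpa using norm_sum_le s f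
  have h2 : (∑ i ∈ s, ‖f i‖) ^ 2 ≤ (s.card : ℝ) * ∑ i ∈ s, ‖f i‖ ^ 2 := by
    have := Finset.sum_mul_sq_le_sq_mul_sq s (fun _ => (1:ℝ)) (fun i => ‖f i‖)
    simpa using this
  have h0 : (0:ℝ) ≤ ‖∑ i ∈ s, f i‖ := norm_nonneg _
  nlinarith [Finset.sum_nonneg (fun i (_ : i ∈ s) => norm_nonneg (f i))]

/-- Factorization of a sum over a triple product of finsets. -/
lemma sum_product_mul {α β γ : Type*} (s : Finset α) (t : Finset β) (u : Finset γ)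
    (f : α → ℝ) (g : β → ℝ) (h : γ → ℝ) :
    ∑ p ∈ s ×ˢ t ×ˢ u, f p.1 * g p.2.1 * h p.2.2
      = (∑ x ∈ s, f x) * (∑ y ∈ t, g y) * (∑ z ∈ u, h z) := by
  rw [Finset.sum_product]
  have inner : ∀ x : α, ∑ q ∈ t ×ˢ u, f x * g q.1 * h q.2
      = f x * ((∑ y ∈ t, g y) * (∑ z ∈ u, h z)) := by
    intro x
    rw [Finset.sum_product]
    have : ∀ y ∈ t, ∑ z ∈ u, f x * g (y, z).1 * h (y, z).2
        = f x * ∑ z ∈ u, g y * h z := by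
      intro y _
      rw [Finset.mul_sum]
      exact Finset.sum_congr rfl fun z _ => by ring
    rw [Finset.sum_congr rfl this, ← Finset.mul_sum]
    congr 1
    rw [← Finset.sum_mul_sum]
  rw [Finset.sum_congr rfl fun x _ => inner x, ← Finset.sum_mul, ← mul_assoc]

/-- Bound on the `w₀` integral. -/
lemma integral_bound {η C₀ : ℝ} {w : ℝ → ℂ} (hη : 0 < η) (hη2 : Real.exp η ≤ 2) (hC₀ : 0 < C₀)
    (hw : WBdd η 1 C₀ w) : ‖∫ x in Set.Ioi (0:ℝ), w x‖ ≤ 2 * C₀ := by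
  set aa := Real.exp (-η) with haa
  set bb := Real.exp η with hbb
  have hab : 0 < aa ∧ aa ≤ bb := by
    constructor
    · exact Real.exp_pos _
    · exact Real.exp_le_exp.mpr (by linarith)
  have hstep1 : ∫ x in Set.Ioi (0:ℝ), w x = ∫ x in Set.Ioi (0:ℝ), (Set.Icc aa bb).indicator w x := by
    refine setIntegral_congr_fun measurableSet_Ioi fun x hx => ?_
    by_cases hmem : x ∈ Set.Icc aa bb
    · rw [Set.indicator_of_mem hmem]
    · rw [Set.indicator_of_notMem hmem]
      refine (hw x hx).2 fun hcon => hmem ?_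
      rw [Set.mem_Icc]
      constructor <;> [linarith [hcon.1]; linarith [hcon.2]]
  have hstep2 : ∫ x in Set.Ioi (0:ℝ), (Set.Icc aa bb).indicator w x
      = ∫ x in Set.Icc aa bb ∩ Set.Ioi 0, w x := by
    rw [integral_indicator measurableSet_Icc, Measure.restrict_restrict measurableSet_Icc]
  set u : Set ℝ := Set.Icc aa bb ∩ Set.Ioi 0 with hu
  have humeas : MeasurableSet u := measurableSet_Icc.inter measurableSet_Ioi
  have hvol : volume u ≤ ENNReal.ofReal (bb - aa) := by
    calc volume u ≤ volume (Set.Icc aa bb) := measure_mono Set.inter_subset_left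
      _ = ENNReal.ofReal (bb - aa) := Real.volume_Icc
  have hvol' : (volume u).toReal ≤ 2 := by
    have h1 : (volume u).toReal ≤ (ENNReal.ofReal (bb - aa)).toReal := by
      apply ENNReal.toReal_mono (by simp) hvol
    have h2 : (ENNReal.ofReal (bb - aa)).toReal = bb - aa := by
      rw [ENNReal.toReal_ofReal (by linarith [hab.1, hab.2])]
    rw [h2] at h1
    have : bb - aa ≤ 2 := by linarith [hab.1]
    linarith
  rw [hstep1, hstep2]
  by_cases hint : IntegrableOn w u volume
  · have hnorm : ‖∫ x in u, w x‖ ≤ ∫ x in u, ‖w x‖ := by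
      simpa using
        MeasureTheory.norm_integral_le_integral_norm (μ := volume.restrict u) w
    have hmono : ∫ x in u, ‖w x‖ ≤ ∫ _x in u, C₀ := by
      apply integral_mono_of_nonneg
      · exact Filter.Eventually.of_forall fun x => norm_nonneg _
      · exact integrableOn_const (lt_of_le_of_lt hvol (by simp)).ne
      · rw [Filter.EventuallyLE, ae_restrict_iff' humeas]
        refine Filter.Eventually.of_forall fun x hx => ?_
        obtain ⟨⟨hx1, hx2⟩, hx3⟩ := hx
        exact (hw x hx3).1 ⟨by linarith, by linarith⟩
    have hconst : ∫ _x in u, C₀ = (volume u).toReal * C₀ := by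
      rw [setIntegral_const, smul_eq_mul, Measure.real]
    have : (volume u).toReal * C₀ ≤ 2 * C₀ := by nlinarith
    linarith
  · rw [integral_undef hint]
    simp
    positivity

set_option maxHeartbeats 1000000 in
theorem stmt4 (ε η c C₀ : ℝ)
    (hε : 0 < ε) (hη : 0 < η) (hη' : η ≤ Real.log 2 / 3) (hc : 0 < c) (hC₀ : 0 < C₀) :
    ∃ C : ℝ, 0 < C ∧
      ∀ (K₁ K₂ M₁ T : ℝ) (w₀ w₁ w₂ : ℝ → ℂ) (a : Gi → ℂ),
        1 ≤ K₁ → 1 ≤ K₂ → 1 ≤ M₁ → 0 < T →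
        c * max (max (K₁ ^ 2) (K₂ ^ 2)) (M₁ ^ 2) ≤ T →
        WBdd η 1 C₀ w₀ → WBdd η K₁ C₀ w₁ → WBdd η K₂ C₀ w₂ →
        (∀ μ : Gi, a μ ≠ 0 → Real.exp (-η) * M₁ ≤ gnorm μ ∧ gnorm μ ≤ Real.exp η * M₁) →
        ‖D0 T w₀ w₁ w₂ a‖ ≤
          C * T ^ (1 + ε) * K₁ * K₂ * ∑' μ : Gi, ‖a μ‖ ^ 2 := by
  have hε' : (0:ℝ) < ε/3 := by linarith
  obtain ⟨Cd, hCd1, hCdb⟩ := divisor_bound (ε/3) hε'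
  have hCd0 : (0:ℝ) < Cd := lt_of_lt_of_le one_pos hCd1
  set C : ℝ := Real.pi * (2*C₀) * (Cd^2 * 64 ^ (ε/3) / c ^ ε) * (2500 * C₀^4) with hC
  have h64 : (0:ℝ) < 64 ^ (ε/3) := Real.rpow_pos_of_pos (by norm_num) _
  have hcε : (0:ℝ) < c ^ ε := Real.rpow_pos_of_pos hc _
  have hCpos : 0 < C := by
    rw [hC]
    have hπ := Real.pi_pos
    positivity
  refine ⟨C, hCpos, ?_⟩
  intro K₁ K₂ M₁ T w₀ w₁ w₂ a hK₁ hK₂ hM₁ hT hTmax hw₀ hw₁ hw₂ ha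
  have hη2 : Real.exp η ≤ 2 := by
    rw [show (2:ℝ) = Real.exp (Real.log 2) from (Real.exp_log two_pos).symm]
    apply Real.exp_le_exp.mpr
    have hlog2 : 0 < Real.log 2 := Real.log_pos one_lt_two
    linarith
  -- the finite supports
  set S1 : Finset Gi := (ballF (2*K₁)).filter
    (fun κ => w₁ (gnorm κ) ≠ 0 ∧ κ ≠ 0 ∧ gnorm κ ≤ 2*K₁) with hS1
  set S2 : Finset Gi := (ballF (2*K₂)).filter
    (fun κ => w₂ (gnorm κ) ≠ 0 ∧ κ ≠ 0 ∧ gnorm κ ≤ 2*K₂) with hS2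
  set Sa : Finset Gi := (ballF (2*M₁)).filter (fun μ => a μ ≠ 0 ∧ gnorm μ ≤ 2*M₁) with hSa
  set P : Finset (Gi × Gi × Gi) := S1 ×ˢ S2 ×ˢ Sa with hP
  have hmem1 : ∀ κ : Gi, κ ≠ 0 → w₁ (gnorm κ) ≠ 0 → κ ∈ S1 := by
    intro κ h0 hne
    obtain ⟨hb, -⟩ := wfacts hw₁ hη2 hK₁ h0 hne
    exact Finset.mem_filter.mpr ⟨mem_ballF hb, hne, h0, hb⟩
  have hmem2 : ∀ κ : Gi, κ ≠ 0 → w₂ (gnorm κ) ≠ 0 → κ ∈ S2 := by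
    intro κ h0 hne
    obtain ⟨hb, -⟩ := wfacts hw₂ hη2 hK₂ h0 hne
    exact Finset.mem_filter.mpr ⟨mem_ballF hb, hne, h0, hb⟩
  have hmema : ∀ μ : Gi, a μ ≠ 0 → μ ∈ Sa := by
    intro μ hne
    have hgb : gnorm μ ≤ 2*M₁ := by
      have h2 := (ha μ hne).2
      nlinarith [Real.exp_pos η]
    exact Finset.mem_filter.mpr ⟨mem_ballF hgb, hne, hgb⟩
  set SA : ℝ := ∑' μ : Gi, ‖a μ‖ ^ 2 with hSA
  have hSAsum : SA = ∑ μ ∈ Sa, ‖a μ‖ ^ 2 := by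
    apply tsum_eq_sum
    intro μ hμ
    by_contra hne
    have hane : a μ ≠ 0 := by
      intro h; rw [h] at hne; simp at hne
    exact hμ (hmema μ hane)
  have hSA0 : 0 ≤ SA := by
    rw [hSAsum]; positivity
  -- Cfun as a finite sum
  have hCfin : ∀ ξ : Gi, ξ ≠ 0 → Cfun w₁ w₂ a ξ
      = ∑ p ∈ P, if p.1 * p.2.1 * p.2.2 = ξ then
          w₁ (gnorm p.1) * w₂ (gnorm p.2.1) * a p.2.2 else 0 := by
    intro ξ hξ
    rw [Cfun]
    apply tsum_eq_sum
    intro p hp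
    by_cases hcond : p.1*p.2.1*p.2.2 = ξ
    · rw [if_pos hcond]
      by_contra hne
      have h1 : w₁ (gnorm p.1) ≠ 0 := fun h => hne (by rw [h]; ring)
      have h2 : w₂ (gnorm p.2.1) ≠ 0 := fun h => hne (by rw [h]; ring)
      have h3 : a p.2.2 ≠ 0 := fun h => hne (by rw [h]; ring)
      have hp1 : p.1 ≠ 0 := fun h => hξ (by rw [← hcond, h]; ring)
      have hp2 : p.2.1 ≠ 0 := fun h => hξ (by rw [← hcond, h]; ring)
      exact hp (Finset.mem_product.mpr ⟨hmem1 _ hp1 h1,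
        Finset.mem_product.mpr ⟨hmem2 _ hp2 h2, hmema _ h3⟩⟩)
    · exact if_neg hcond
  set Y : ℝ := 8*(K₁*K₂*M₁) with hY
  have hKK : (1:ℝ) ≤ K₁*K₂ := by nlinarith
  have hKKM : (1:ℝ) ≤ K₁*K₂*M₁ := by nlinarith
  have hY1 : (1:ℝ) ≤ Y := by rw [hY]; nlinarith
  set SX : Finset Gi := (ballF Y).filter (fun ξ => ξ ≠ 0 ∧ gnorm ξ ≤ Y) with hSX
  have hgsupp : ∀ ξ : Gi,
      (if ξ ≠ 0 then ((‖Cfun w₁ w₂ a ξ‖ ^ 2 : ℝ) : ℂ) else 0) ≠ 0 → ξ ∈ SX := by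
    intro ξ hne
    by_cases hξ : ξ ≠ 0
    case neg => rw [if_neg hξ] at hne; exact absurd rfl hne
    rw [if_pos hξ] at hne
    have hCne : Cfun w₁ w₂ a ξ ≠ 0 := by
      intro h; rw [h] at hne; simp at hne
    rw [hCfin ξ hξ] at hCne
    obtain ⟨p, hpP, hpne⟩ := Finset.exists_ne_zero_of_sum_ne_zero hCne
    by_cases hcond : p.1*p.2.1*p.2.2 = ξ
    case neg => rw [if_neg hcond] at hpne; exact absurd rfl hpne
    obtain ⟨hp1, hp23⟩ := Finset.mem_product.mp hpP
    obtain ⟨hp2, hp3⟩ := Finset.mem_product.mp hp23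
    have hb1 : gnorm p.1 ≤ 2*K₁ := (Finset.mem_filter.mp hp1).2.2.2
    have hb2 : gnorm p.2.1 ≤ 2*K₂ := (Finset.mem_filter.mp hp2).2.2.2
    have hb3 : gnorm p.2.2 ≤ 2*M₁ := (Finset.mem_filter.mp hp3).2.2
    have hgξ : gnorm ξ ≤ Y := by
      rw [← hcond, gnorm_mul, gnorm_mul]
      have g1 := gnorm_nonneg p.1
      have g2 := gnorm_nonneg p.2.1
      have g3 := gnorm_nonneg p.2.2
      have h12 : gnorm p.1 * gnorm p.2.1 ≤ (2*K₁)*(2*K₂) :=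
        mul_le_mul hb1 hb2 g2 (by positivity)
      have h123 : gnorm p.1 * gnorm p.2.1 * gnorm p.2.2 ≤ ((2*K₁)*(2*K₂))*(2*M₁) :=
        mul_le_mul h12 hb3 g3 (by positivity)
      rw [hY]; nlinarith
    exact Finset.mem_filter.mpr ⟨mem_ballF hgξ, hξ, hgξ⟩
  -- D0 in finite terms
  set Rsum : ℝ := ∑ ξ ∈ SX, ‖Cfun w₁ w₂ a ξ‖ ^ 2 with hRsumdef
  have hRsum0 : 0 ≤ Rsum := by rw [hRsumdef]; positivity
  have hD0 : ‖D0 T w₀ w₁ w₂ a‖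
      = Real.pi * ‖∫ x in Set.Ioi (0:ℝ), w₀ x‖ * T * Rsum := by
    rw [D0]
    have htsum : ∑' ξ : Gi, (if ξ ≠ 0 then ((‖Cfun w₁ w₂ a ξ‖ ^ 2 : ℝ) : ℂ) else 0)
        = ∑ ξ ∈ SX, (if ξ ≠ 0 then ((‖Cfun w₁ w₂ a ξ‖ ^ 2 : ℝ) : ℂ) else 0) := by
      apply tsum_eq_sum
      intro ξ hξ
      by_contra hne
      exact hξ (hgsupp ξ hne)
    have hsum2 : ∑ ξ ∈ SX, (if ξ ≠ 0 then ((‖Cfun w₁ w₂ a ξ‖ ^ 2 : ℝ) : ℂ) else 0)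
        = ((Rsum : ℝ) : ℂ) := by
      rw [hRsumdef]
      push_cast
      refine Finset.sum_congr rfl fun ξ hξ => ?_
      rw [if_pos (Finset.mem_filter.mp hξ).2.1]
    rw [htsum, hsum2, norm_mul, norm_mul, norm_mul, Complex.norm_of_nonneg Real.pi_pos.le,
      Complex.norm_of_nonneg hT.le, Complex.norm_of_nonneg hRsum0]
  -- cardinality of fibers
  have hNB : ∀ ξ ∈ SX, ((P.filter (fun p => p.1*p.2.1*p.2.2 = ξ)).card : ℝ)
      ≤ Cd^2 * Y ^ (2*(ε/3)) := by
    intro ξ hξ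
    obtain ⟨-, hξ0, hgb⟩ := Finset.mem_filter.mp hξ
    have hinj : (P.filter (fun p => p.1*p.2.1*p.2.2 = ξ)).card
        ≤ ((divF ξ) ×ˢ (divF ξ)).card := by
      apply Finset.card_le_card_of_injOn (fun p => (p.1, p.2.1))
      · intro p hp
        obtain ⟨-, hpc⟩ := Finset.mem_filter.mp hp
        rw [Finset.mem_coe, Finset.mem_product]
        constructor
        · exact mem_divF hξ0 ⟨p.2.1 * p.2.2, by rw [← hpc]; ring⟩
        · exact mem_divF hξ0 ⟨p.1 * p.2.2, by rw [← hpc]; ring⟩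
      · intro p hp p' hp' heq
        simp only [Finset.coe_filter, Set.mem_setOf_eq] at hp hp'
        have h1 : p.1 = p'.1 := (Prod.ext_iff.mp heq).1
        have h2 : p.2.1 = p'.2.1 := (Prod.ext_iff.mp heq).2
        have hne : p.1 * p.2.1 ≠ 0 := by
          intro h
          exact hξ0 (by rw [← hp.2, h, zero_mul])
        have h3 : p.2.2 = p'.2.2 := by
          apply mul_left_cancel₀ hne
          rw [hp.2, h1, h2, hp'.2]
        exact Prod.ext h1 (Prod.ext h2 h3)
    have hcast : ((P.filter (fun p => p.1*p.2.1*p.2.2 = ξ)).card : ℝ)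
        ≤ ((divF ξ).card : ℝ)^2 := by
      rw [Finset.card_product] at hinj
      exact_mod_cast le_of_le_of_eq (Nat.cast_le.mpr hinj) (by push_cast; ring)
    have hdb := hCdb ξ hξ0
    have hdF0 : (0:ℝ) ≤ ((divF ξ).card : ℝ) := Nat.cast_nonneg _
    calc ((P.filter (fun p => p.1*p.2.1*p.2.2 = ξ)).card : ℝ) ≤ ((divF ξ).card : ℝ)^2 := hcast
      _ ≤ (Cd * gnorm ξ ^ (ε/3))^2 := by
          apply pow_le_pow_left₀ hdF0 hdb
      _ = Cd^2 * (gnorm ξ ^ (ε/3))^2 := by ring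
      _ = Cd^2 * gnorm ξ ^ (2*(ε/3)) := by
          have hexp : gnorm ξ ^ (ε/3) * gnorm ξ ^ (ε/3) = gnorm ξ ^ (2*(ε/3)) := by
            rw [← Real.rpow_add (gnorm_pos hξ0)]
            congr 1
            ring
          rw [pow_two (gnorm ξ ^ (ε/3)), hexp]
      _ ≤ Cd^2 * Y ^ (2*(ε/3)) := by
          have hle := Real.rpow_le_rpow (gnorm_nonneg ξ) hgb (by positivity : (0:ℝ) ≤ 2*(ε/3))
          exact mul_le_mul_of_nonneg_left hle (by positivity)
  -- the main sum bound
  set q : Gi × Gi × Gi → ℝ :=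
    fun p => ‖w₁ (gnorm p.1) * w₂ (gnorm p.2.1) * a p.2.2‖ ^ 2 with hq
  have hq0 : ∀ p, 0 ≤ q p := fun p => by rw [hq]; positivity
  set NB : ℝ := Cd^2 * Y ^ (2*(ε/3)) with hNBdef
  have hNB0 : 0 ≤ NB := by
    rw [hNBdef]
    have : (0:ℝ) ≤ Y ^ (2*(ε/3)) := Real.rpow_nonneg (by linarith) _
    positivity
  have hRsumle : Rsum ≤ NB * ∑ p ∈ P, q p := by
    have hper : ∀ ξ ∈ SX, ‖Cfun w₁ w₂ a ξ‖ ^ 2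
        ≤ NB * ∑ p ∈ P.filter (fun p => p.1*p.2.1*p.2.2 = ξ), q p := by
      intro ξ hξ
      have hξ0 : ξ ≠ 0 := (Finset.mem_filter.mp hξ).2.1
      rw [hCfin ξ hξ0, ← Finset.sum_filter]
      calc ‖∑ p ∈ P.filter (fun p => p.1*p.2.1*p.2.2 = ξ),
            w₁ (gnorm p.1) * w₂ (gnorm p.2.1) * a p.2.2‖ ^ 2
          ≤ ((P.filter (fun p => p.1*p.2.1*p.2.2 = ξ)).card : ℝ) *
            ∑ p ∈ P.filter (fun p => p.1*p.2.1*p.2.2 = ξ), q p := cs_finset _ _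
        _ ≤ NB * ∑ p ∈ P.filter (fun p => p.1*p.2.1*p.2.2 = ξ), q p := by
            apply mul_le_mul_of_nonneg_right (hNB ξ hξ)
            exact Finset.sum_nonneg fun p _ => hq0 p
    have hdouble : ∑ ξ ∈ SX, ∑ p ∈ P.filter (fun p => p.1*p.2.1*p.2.2 = ξ), q p
        ≤ ∑ p ∈ P, q p := by
      calc ∑ ξ ∈ SX, ∑ p ∈ P.filter (fun p => p.1*p.2.1*p.2.2 = ξ), q p
          = ∑ ξ ∈ SX, ∑ p ∈ P, if p.1*p.2.1*p.2.2 = ξ then q p else 0 :=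
            Finset.sum_congr rfl fun ξ _ => Finset.sum_filter _ _
        _ = ∑ p ∈ P, ∑ ξ ∈ SX, if p.1*p.2.1*p.2.2 = ξ then q p else 0 := Finset.sum_comm
        _ = ∑ p ∈ P, if p.1*p.2.1*p.2.2 ∈ SX then q p else 0 :=
            Finset.sum_congr rfl fun p _ => Finset.sum_ite_eq SX (p.1*p.2.1*p.2.2) (fun _ => q p)
        _ ≤ ∑ p ∈ P, q p := by
            apply Finset.sum_le_sum
            intro p _
            split
            · exact le_refl _
            · exact hq0 p
    calc Rsum ≤ ∑ ξ ∈ SX, (NB * ∑ p ∈ P.filter (fun p => p.1*p.2.1*p.2.2 = ξ), q p) :=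
          Finset.sum_le_sum hper
      _ = NB * ∑ ξ ∈ SX, ∑ p ∈ P.filter (fun p => p.1*p.2.1*p.2.2 = ξ), q p :=
          (Finset.mul_sum _ _ _).symm
      _ ≤ NB * ∑ p ∈ P, q p := mul_le_mul_of_nonneg_left hdouble hNB0
  -- bound W = ∑ q
  have hWsum : ∑ p ∈ P, q p ≤ (C₀^2 * (50*K₁)) * (C₀^2 * (50*K₂)) * SA := by
    have hqeq : ∀ p : Gi × Gi × Gi, q p = ‖w₁ (gnorm p.1)‖ ^ 2 *
        ‖w₂ (gnorm p.2.1)‖ ^ 2 * ‖a p.2.2‖ ^ 2 := by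
      intro p
      simp only [hq, norm_mul]
      ring
    have hfact : ∑ p ∈ P, q p = (∑ x ∈ S1, ‖w₁ (gnorm x)‖ ^ 2) *
        (∑ y ∈ S2, ‖w₂ (gnorm y)‖ ^ 2) * (∑ z ∈ Sa, ‖a z‖ ^ 2) := by
      rw [hP]
      rw [Finset.sum_congr rfl fun p _ => hqeq p]
      exact sum_product_mul S1 S2 Sa (fun x => ‖w₁ (gnorm x)‖ ^ 2)
        (fun y => ‖w₂ (gnorm y)‖ ^ 2) (fun z => ‖a z‖ ^ 2)
    rw [hfact]
    have hb1 : ∑ x ∈ S1, ‖w₁ (gnorm x)‖ ^ 2 ≤ C₀^2 * (50*K₁) := by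
      have hball : ((S1.card : ℝ)) ≤ 50 * K₁ := by
        have h1 : (S1.card : ℕ) ≤ (ballF (2*K₁)).card := Finset.card_filter_le _ _
        have h2 := card_ballF_le (by linarith : (1:ℝ) ≤ 2*K₁)
        calc ((S1.card : ℕ) : ℝ) ≤ ((ballF (2*K₁)).card : ℝ) := by exact_mod_cast h1
          _ ≤ 25 * (2*K₁) := h2
          _ = 50 * K₁ := by ring
      calc ∑ x ∈ S1, ‖w₁ (gnorm x)‖ ^ 2 ≤ ∑ _x ∈ S1, C₀^2 := by
            apply Finset.sum_le_sum
            intro x hx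
            obtain ⟨-, hne, h0, -⟩ := Finset.mem_filter.mp hx
            have := (wfacts hw₁ hη2 hK₁ h0 hne).2
            nlinarith [norm_nonneg (w₁ (gnorm x))]
        _ = (S1.card : ℝ) * C₀^2 := by rw [Finset.sum_const, nsmul_eq_mul]
        _ ≤ (50*K₁) * C₀^2 := by nlinarith
        _ = C₀^2 * (50*K₁) := by ring
    have hb2 : ∑ x ∈ S2, ‖w₂ (gnorm x)‖ ^ 2 ≤ C₀^2 * (50*K₂) := by
      have hball : ((S2.card : ℝ)) ≤ 50 * K₂ := by
        have h1 : (S2.card : ℕ) ≤ (ballF (2*K₂)).card := Finset.card_filter_le _ _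
        have h2 := card_ballF_le (by linarith : (1:ℝ) ≤ 2*K₂)
        calc ((S2.card : ℕ) : ℝ) ≤ ((ballF (2*K₂)).card : ℝ) := by exact_mod_cast h1
          _ ≤ 25 * (2*K₂) := h2
          _ = 50 * K₂ := by ring
      calc ∑ x ∈ S2, ‖w₂ (gnorm x)‖ ^ 2 ≤ ∑ _x ∈ S2, C₀^2 := by
            apply Finset.sum_le_sum
            intro x hx
            obtain ⟨-, hne, h0, -⟩ := Finset.mem_filter.mp hx
            have := (wfacts hw₂ hη2 hK₂ h0 hne).2
            nlinarith [norm_nonneg (w₂ (gnorm x))]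
        _ = (S2.card : ℝ) * C₀^2 := by rw [Finset.sum_const, nsmul_eq_mul]
        _ ≤ (50*K₂) * C₀^2 := by nlinarith
        _ = C₀^2 * (50*K₂) := by ring
    have hb3 : ∑ z ∈ Sa, ‖a z‖ ^ 2 = SA := hSAsum.symm
    have hS1nn : (0:ℝ) ≤ ∑ x ∈ S1, ‖w₁ (gnorm x)‖ ^ 2 :=
      Finset.sum_nonneg fun x _ => by positivity
    have hS2nn : (0:ℝ) ≤ ∑ x ∈ S2, ‖w₂ (gnorm x)‖ ^ 2 :=
      Finset.sum_nonneg fun x _ => by positivity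
    rw [hb3]
    have hstep : (∑ x ∈ S1, ‖w₁ (gnorm x)‖ ^ 2) *
        (∑ y ∈ S2, ‖w₂ (gnorm y)‖ ^ 2)
        ≤ (C₀^2 * (50*K₁)) * (C₀^2 * (50*K₂)) :=
      mul_le_mul hb1 hb2 hS2nn (by positivity)
    exact mul_le_mul_of_nonneg_right hstep hSA0
  -- rpow bound on Y
  have hXb : K₁^2 ≤ T/c ∧ K₂^2 ≤ T/c ∧ M₁^2 ≤ T/c := by
    have hmax : max (max (K₁ ^ 2) (K₂ ^ 2)) (M₁ ^ 2) ≤ T/c := by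
      rw [le_div_iff₀ hc]
      calc max (max (K₁ ^ 2) (K₂ ^ 2)) (M₁ ^ 2) * c
          = c * max (max (K₁ ^ 2) (K₂ ^ 2)) (M₁ ^ 2) := by ring
        _ ≤ T := hTmax
    exact ⟨le_trans (le_trans (le_max_left _ _) (le_max_left _ _)) hmax,
      le_trans (le_trans (le_max_right _ _) (le_max_left _ _)) hmax,
      le_trans (le_max_right _ _) hmax⟩
  have hYb : Y ^ (2*(ε/3)) ≤ 64 ^ (ε/3) * T ^ ε / c ^ ε := by
    have hYnn : (0:ℝ) ≤ Y := by linarith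
    have hXnn : (0:ℝ) ≤ T/c := by positivity
    have hY2 : Y^2 ≤ 64 * (T/c)^3 := by
      have h1 : K₁^2*K₂^2 ≤ (T/c)*(T/c) :=
        mul_le_mul hXb.1 hXb.2.1 (sq_nonneg _) hXnn
      have h2 : K₁^2*K₂^2*M₁^2 ≤ (T/c)*(T/c)*(T/c) :=
        mul_le_mul h1 hXb.2.2 (sq_nonneg _) (by positivity)
      rw [hY]; nlinarith
    calc Y ^ (2*(ε/3)) = (Y^2) ^ (ε/3) := by
          rw [← Real.rpow_natCast Y 2, ← Real.rpow_mul hYnn]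
          norm_num
        _ ≤ (64 * (T/c)^3) ^ (ε/3) := Real.rpow_le_rpow (by positivity) hY2 (by positivity)
        _ = 64 ^ (ε/3) * ((T/c)^3) ^ (ε/3) := Real.mul_rpow (by norm_num) (by positivity)
        _ = 64 ^ (ε/3) * (T/c) ^ ε := by
            congr 1
            rw [← Real.rpow_natCast (T/c) 3, ← Real.rpow_mul hXnn]
            congr 1
            push_cast
            ring
        _ = 64 ^ (ε/3) * T ^ ε / c ^ ε := by
            rw [Real.div_rpow hT.le hc.le]
            ring
  -- final assembly
  have hIb := integral_bound hη hη2 hC₀ hw₀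
  have hIb0 : (0:ℝ) ≤ ‖∫ x in Set.Ioi (0:ℝ), w₀ x‖ := norm_nonneg _
  have hT1ε : T ^ (1+ε) = T * T ^ ε := by
    rw [Real.rpow_add hT, Real.rpow_one]
  rw [hD0]
  have hZ : Rsum ≤ NB * ((C₀^2 * (50*K₁)) * (C₀^2 * (50*K₂)) * SA) :=
    le_trans hRsumle (mul_le_mul_of_nonneg_left hWsum hNB0)
  have hNB2 : NB ≤ Cd^2 * (64 ^ (ε/3) * T ^ ε / c ^ ε) := by
    rw [hNBdef]
    apply mul_le_mul_of_nonneg_left hYb (by positivity)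
  have hZ2 : Rsum ≤ (Cd^2 * (64 ^ (ε/3) * T ^ ε / c ^ ε)) *
      ((C₀^2 * (50*K₁)) * (C₀^2 * (50*K₂)) * SA) := by
    apply le_trans hZ
    apply mul_le_mul_of_nonneg_right hNB2
    positivity
  calc Real.pi * ‖∫ x in Set.Ioi (0:ℝ), w₀ x‖ * T * Rsum
      ≤ Real.pi * (2*C₀) * T * ((Cd^2 * (64 ^ (ε/3) * T ^ ε / c ^ ε)) *
        ((C₀^2 * (50*K₁)) * (C₀^2 * (50*K₂)) * SA)) := by
        have h1 : Real.pi * ‖∫ x in Set.Ioi (0:ℝ), w₀ x‖ * T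
            ≤ Real.pi * (2*C₀) * T :=
          mul_le_mul_of_nonneg_right (mul_le_mul_of_nonneg_left hIb Real.pi_pos.le) hT.le
        have h2 : (0:ℝ) ≤ Real.pi * (2*C₀) * T := by
          have := Real.pi_pos
          positivity
        calc Real.pi * ‖∫ x in Set.Ioi (0:ℝ), w₀ x‖ * T * Rsum
            ≤ Real.pi * (2*C₀) * T * Rsum := by
              apply mul_le_mul_of_nonneg_right h1 hRsum0
          _ ≤ _ := mul_le_mul_of_nonneg_left hZ2 h2
    _ = C * T ^ (1+ε) * K₁ * K₂ * SA := by
        rw [hC, hT1ε]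
        field_simp
        ring
end
end

section
/- With C₀ = 4π·e^γ (γ Euler's constant): T(d,t) ≥ C₀^{−2} for all d ∈ ℤ and t ∈ ℝ, and there exist absolute constants c₁, c₂ > 0 such that c₁·|2|d| + 1/2 + it|² ≤ T(d,t) ≤ c₂·|2|d| + 1/2 + it|² for all d ∈ ℤ and t ∈ ℝ. -/
noncomputable section
open Complex Real
open scoped Classical

/-- `z_{d,t} = 2|d| + 1/2 + i t`. -/
def zdt (d : ℤ) (t : ℝ) : ℂ := 2 * (|d| : ℤ) + 1 / 2 + (t : ℂ) * Complex.I

/-- `T(d,t) = exp(2·Re(Γ′(z_{d,t})/Γ(z_{d,t})) − 2 log π)`. -/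
def Tdt (d : ℤ) (t : ℝ) : ℝ :=
  Real.exp (2 * (deriv Complex.Gamma (zdt d t) / Complex.Gamma (zdt d t)).re - 2 * Real.log Real.pi)

/-- `X_d(s) = π^{2s−1}·Γ(2|d|+1−s)/Γ(2|d|+s)`. -/
def Xd (d : ℤ) (s : ℂ) : ℂ :=
  (Real.pi : ℂ) ^ (2 * s - 1) * Complex.Gamma (2 * ((|d| : ℤ) : ℂ) + 1 - s) /
    Complex.Gamma (2 * ((|d| : ℤ) : ℂ) + s)

open scoped Topology

namespace Stmt8Aux

local notation "γ" => Real.eulerMascheroniConstant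

/-- terms of the digamma series -/
def Fc (n : ℕ) (z : ℂ) : ℂ := 1/((n:ℂ)+1) - 1/((n:ℂ)+z)

def U : Set ℂ := {z | 0 < z.re}

lemma isOpenU : IsOpen U := isOpen_lt continuous_const Complex.continuous_re

lemma summable_sq : Summable (fun n : ℕ => 1/((n:ℝ)+1)^2) := by
  have := (summable_nat_add_iff (f := fun n : ℕ => 1/(n:ℝ)^2) 1).2
    (Real.summable_one_div_nat_pow.2 one_lt_two)
  simpa using this

lemma summable_aux {c : ℝ} (hc : 0 < c) :
    Summable (fun n : ℕ => 1/(((n:ℝ)+1)*((n:ℝ)+c))) := by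
  refine Summable.of_nonneg_of_le (f := fun n : ℕ => (1/min c 1) * (1/((n:ℝ)+1)^2)) ?_ ?_ ?_
  · intro n
    have hn : (0:ℝ) ≤ n := n.cast_nonneg
    have h1 : (0:ℝ) < (n:ℝ)+1 := by linarith
    have h2 : (0:ℝ) < (n:ℝ)+c := by linarith
    positivity
  · intro n
    have hn : (0:ℝ) ≤ n := n.cast_nonneg
    have hm : 0 < min c 1 := lt_min hc one_pos
    have e1 : (n:ℝ)*(min c 1) ≤ n := mul_le_of_le_one_right hn (min_le_right c 1)
    have e2 : min c 1 ≤ c := min_le_left c 1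
    have h1 : min c 1 * ((n:ℝ)+1)^2 ≤ ((n:ℝ)+1)*((n:ℝ)+c) := by
      nlinarith [mul_le_mul_of_nonneg_left e1 hn, mul_le_mul_of_nonneg_left e2 hn, e1, e2]
    calc 1/(((n:ℝ)+1)*((n:ℝ)+c)) ≤ 1/(min c 1 * ((n:ℝ)+1)^2) := by
          apply one_div_le_one_div_of_le (by positivity) h1
      _ = (1/min c 1) * (1/((n:ℝ)+1)^2) := by
          rw [one_div_mul_one_div]
  · exact summable_sq.mul_left _

lemma norm_Fc_le {z : ℂ} (hz : 0 < z.re) (n : ℕ) :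
    ‖Fc n z‖ ≤ ‖z - 1‖ * (1/(((n:ℝ)+1)*((n:ℝ)+z.re))) := by
  have hn : (0:ℝ) ≤ n := n.cast_nonneg
  have hre : ((n:ℝ)) + z.re ≤ ‖(n:ℂ) + z‖ := by
    have := Complex.re_le_norm ((n:ℂ)+z)
    simpa [Complex.add_re] using this
  have hrepos : (0:ℝ) < (n:ℝ) + z.re := by linarith
  have h1 : ((n:ℂ)+1) ≠ 0 := by
    intro h
    have : ((n:ℂ)+1).re = 0 := by rw [h]; simp
    simp only [Complex.add_re, Complex.natCast_re, Complex.one_re] at this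
    linarith
  have h2 : ((n:ℂ)+z) ≠ 0 := by
    intro h
    have : ((n:ℂ)+z).re = 0 := by rw [h]; simp
    simp only [Complex.add_re, Complex.natCast_re] at this
    linarith
  have hFc : Fc n z = (z-1)/(((n:ℂ)+1)*((n:ℂ)+z)) := by
    rw [Fc]
    field_simp
    ring
  have hnorm1 : ‖(n:ℂ)+1‖ = (n:ℝ)+1 := by
    rw [show ((n:ℂ)+1) = (((n:ℝ)+1 : ℝ):ℂ) by push_cast; ring, Complex.norm_real]
    rw [Real.norm_eq_abs, abs_of_pos (by linarith)]
  have hle : ((n:ℝ)+1) * ((n:ℝ)+z.re) ≤ ((n:ℝ)+1) * ‖(n:ℂ)+z‖ :=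
    mul_le_mul_of_nonneg_left hre (by linarith)
  rw [hFc, norm_div, norm_mul, hnorm1, mul_one_div]
  exact div_le_div_of_nonneg_left (norm_nonneg _) (by positivity) hle

lemma summable_Fc {z : ℂ} (hz : 0 < z.re) : Summable (fun n => Fc n z) :=
  Summable.of_norm_bounded ((summable_aux hz).mul_left ‖z-1‖) (norm_Fc_le hz)

lemma zne {z : ℂ} (hz : 0 < z.re) : ∀ m : ℕ, z ≠ -m := by
  intro m h
  have h2 : z.re = -(m:ℝ) := by rw [h]; simp
  have h3 : (0:ℝ) ≤ (m:ℝ) := m.cast_nonneg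
  rw [h2] at hz
  linarith

/-- the digamma function as a series -/
def psiF (z : ℂ) : ℂ := -(γ:ℂ) + ∑' n, Fc n z

lemma analyticPsiF : AnalyticOnNhd ℂ psiF U := by
  intro z₀ hz₀
  have hz₀' : 0 < z₀.re := hz₀
  have hr : 0 < z₀.re / 2 := half_pos hz₀'
  set r := z₀.re/2 with hrdef
  have hball : ∀ w ∈ Metric.ball z₀ r, r ≤ w.re ∧ ‖w - 1‖ ≤ r + ‖z₀‖ + 1 := by
    intro w hw
    rw [Metric.mem_ball, Complex.dist_eq] at hw
    constructor
    · have h1 : |(w - z₀).re| ≤ ‖w - z₀‖ := Complex.abs_re_le_norm _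
      have h2 : |w.re - z₀.re| < r := by
        simpa [Complex.sub_re] using h1.trans_lt hw
      have h3 := (abs_lt.1 h2).1
      have : z₀.re = r + r := by rw [hrdef]; ring
      linarith
    · have he : w - 1 = (w - z₀) + (z₀ - 1) := by ring
      rw [he]
      refine (norm_add_le _ _).trans ?_
      have h3 : ‖z₀ - 1‖ ≤ ‖z₀‖ + 1 := by
        simpa using norm_sub_le z₀ 1
      have h4 : ‖w - z₀‖ ≤ r := le_of_lt (by exact hw)
      linarith
  have hU : Metric.ball z₀ r ⊆ U := by
    intro w hw
    exact lt_of_lt_of_le hr (hball w hw).1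
  have hdiff : DifferentiableOn ℂ (fun w => ∑' n, Fc n w) (Metric.ball z₀ r) := by
    refine Complex.differentiableOn_tsum_of_summable_norm
      (u := fun n => (r + ‖z₀‖ + 1) * (1/(((n:ℝ)+1)*((n:ℝ)+r))))
      ((summable_aux hr).mul_left _) (fun i => ?_) Metric.isOpen_ball (fun n w hw => ?_)
    · unfold Fc
      apply DifferentiableOn.sub (differentiableOn_const _)
      apply DifferentiableOn.div (differentiableOn_const _)
      · exact (differentiableOn_const _).add differentiable_id.differentiableOn
      · intro w hw
        have hwre : 0 < w.re := hU hw
        intro h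
        have h2 : ((i:ℂ)+w).re = 0 := by rw [h]; simp
        simp only [Complex.add_re, Complex.natCast_re] at h2
        have h3 : (0:ℝ) ≤ (i:ℝ) := i.cast_nonneg
        linarith
    · have h1 : 0 < w.re := hU hw
      refine (norm_Fc_le h1 n).trans ?_
      have hw1 : ‖w - 1‖ ≤ r + ‖z₀‖ + 1 := (hball w hw).2
      have hw2 : r ≤ w.re := (hball w hw).1
      have hn : (0:ℝ) ≤ n := n.cast_nonneg
      have hb : 1/(((n:ℝ)+1)*((n:ℝ)+w.re)) ≤ 1/(((n:ℝ)+1)*((n:ℝ)+r)) := by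
        apply one_div_le_one_div_of_le (by positivity)
        apply mul_le_mul_of_nonneg_left (by linarith) (by linarith)
      exact mul_le_mul hw1 hb (by positivity) (by positivity)
  have hdiff2 : DifferentiableOn ℂ psiF (Metric.ball z₀ r) := by
    unfold psiF
    exact (differentiableOn_const _).add hdiff
  exact (hdiff2.analyticOnNhd Metric.isOpen_ball) z₀ (Metric.mem_ball_self hr)

lemma summable_real {x : ℝ} (hx : 0 < x) :
    Summable (fun n : ℕ => 1/((n:ℝ)+1) - 1/((n:ℝ)+x)) := by
  apply Summable.of_norm_bounded ((summable_aux hx).mul_left (|x-1|))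
  intro n
  have hn : (0:ℝ) ≤ n := n.cast_nonneg
  have h1 : (0:ℝ) < (n:ℝ)+1 := by linarith
  have h2 : (0:ℝ) < (n:ℝ)+x := by linarith
  have he : 1/((n:ℝ)+1) - 1/((n:ℝ)+x) = (x-1) * (1/(((n:ℝ)+1)*((n:ℝ)+x))) := by
    field_simp
    ring
  rw [Real.norm_eq_abs, he, abs_mul,
    abs_of_pos (by positivity : (0:ℝ) < 1/(((n:ℝ)+1)*((n:ℝ)+x)))]

lemma real_digamma {x : ℝ} (hx : 0 < x) (hx1 : x ≤ 1) :
    deriv (fun y => Real.log (Real.Gamma y)) x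
      = -γ + ∑' n : ℕ, (1/((n:ℝ)+1) - 1/((n:ℝ)+x)) := by
  set f : ℝ → ℝ := fun y => Real.log (Real.Gamma y) with hf
  have hdiffG : ∀ {y : ℝ}, 0 < y → DifferentiableAt ℝ Real.Gamma y := by
    intro y hy
    refine Real.differentiableAt_Gamma (fun m => ?_)
    intro h
    have : (0:ℝ) ≤ m := m.cast_nonneg
    rw [h] at hy
    linarith
  have hder : ∀ {y : ℝ}, 0 < y → DifferentiableAt ℝ f y := by
    intro y hy
    exact (hdiffG hy).log (Real.Gamma_pos_of_pos hy).ne'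
  have hrec : ∀ y : ℝ, 0 < y → f (y+1) = f y + Real.log y := by
    intro y hy
    simp only [f, Real.Gamma_add_one hy.ne',
      Real.log_mul hy.ne' (Real.Gamma_pos_of_pos hy).ne']
    ring
  have hder_rec : ∀ y : ℝ, 0 < y → deriv f (y+1) = deriv f y + 1/y := by
    intro y hy
    rw [← deriv_comp_add_const, one_div, ← Real.deriv_log,
      ← deriv_add (hder hy) (Real.differentiableAt_log hy.ne')]
    apply Filter.EventuallyEq.deriv_eq
    filter_upwards [eventually_gt_nhds hy] with u hu
    exact hrec u hu
  have hshift : ∀ n : ℕ, deriv f (x + n) = deriv f x + ∑ k ∈ Finset.range n, 1/((k:ℝ) + x) := by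
    intro n
    induction n with
    | zero => simp
    | succ m ih =>
      have hm : (0:ℝ) ≤ m := m.cast_nonneg
      have hstep : x + ((m+1 : ℕ):ℝ) = (x + m) + 1 := by push_cast; ring
      rw [hstep, hder_rec (x + m) (by linarith), ih, Finset.sum_range_succ]
      ring
  have hmono : MonotoneOn (deriv f) (Set.Ioi (0:ℝ)) := by
    have := ConvexOn.monotoneOn_deriv Real.convexOn_log_Gamma
      (fun y hy => hder (Set.mem_Ioi.1 hy))
    exact this
  have hval : ∀ n : ℕ, deriv f ((n:ℝ) + 1) = -γ + (harmonic n : ℝ) := by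
    intro n
    have hpos : (0:ℝ) < (n:ℝ)+1 := by positivity
    have hG : Real.Gamma ((n:ℝ)+1) ≠ 0 := (Real.Gamma_pos_of_pos hpos).ne'
    have hfact : ((Nat.factorial n : ℕ):ℝ) ≠ 0 := by
      have := Nat.factorial_pos n
      positivity
    have h1 : deriv f ((n:ℝ)+1) = deriv Real.Gamma ((n:ℝ)+1) / Real.Gamma ((n:ℝ)+1) := by
      simp only [f]
      rw [deriv.log (hdiffG hpos) hG]
    rw [h1, Real.deriv_Gamma_nat n, Real.Gamma_nat_eq_factorial, mul_comm, mul_div_assoc,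
      div_self hfact, mul_one]
  -- partial sums
  set T : ℕ → ℝ := fun m => ∑ k ∈ Finset.range m, 1/((k:ℝ) + x) with hT
  set S : ℕ → ℝ := fun m => ∑ k ∈ Finset.range m, (1/((k:ℝ)+1) - 1/((k:ℝ)+x)) with hS
  have hH : ∀ m : ℕ, (harmonic m : ℝ) = ∑ k ∈ Finset.range m, 1/((k:ℝ)+1) := by
    intro m
    rw [harmonic]
    push_cast
    simp [one_div]
  have hHS : ∀ m : ℕ, (harmonic m : ℝ) - T m = S m := by
    intro m
    rw [hH, hT, hS, ← Finset.sum_sub_distrib]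
  have key1 : ∀ n : ℕ, -γ + (harmonic n : ℝ) ≤ deriv f x + T (n+1) := by
    intro n
    have hmem1 : ((n:ℝ)+1) ∈ Set.Ioi (0:ℝ) := by
      simp only [Set.mem_Ioi]; positivity
    have hmem2 : (x + ((n+1:ℕ):ℝ)) ∈ Set.Ioi (0:ℝ) := by
      simp only [Set.mem_Ioi]; push_cast; linarith [n.cast_nonneg (α := ℝ)]
    have hle : ((n:ℝ)+1) ≤ x + ((n+1:ℕ):ℝ) := by push_cast; linarith
    have := hmono hmem1 hmem2 hle
    rw [hval n, hshift (n+1)] at this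
    exact this
  have key2 : ∀ n : ℕ, deriv f x + T (n+1) ≤ -γ + (harmonic (n+1) : ℝ) := by
    intro n
    have hmem1 : (x + ((n+1:ℕ):ℝ)) ∈ Set.Ioi (0:ℝ) := by
      simp only [Set.mem_Ioi]; push_cast; linarith [n.cast_nonneg (α := ℝ)]
    have hmem2 : (((n+1:ℕ)):ℝ)+1 ∈ Set.Ioi (0:ℝ) := by
      simp only [Set.mem_Ioi]; positivity
    have hle : x + ((n+1:ℕ):ℝ) ≤ ((n+1:ℕ):ℝ)+1 := by push_cast; linarith
    have := hmono hmem1 hmem2 hle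
    rw [hval (n+1), hshift (n+1)] at this
    exact this
  -- limits
  have hlim : Filter.Tendsto S Filter.atTop
      (𝓝 (∑' n : ℕ, (1/((n:ℝ)+1) - 1/((n:ℝ)+x)))) :=
    (summable_real hx).hasSum.tendsto_sum_nat
  have hlimS : Filter.Tendsto (fun n : ℕ => S (n+1)) Filter.atTop
      (𝓝 (∑' n : ℕ, (1/((n:ℝ)+1) - 1/((n:ℝ)+x)))) :=
    hlim.comp (Filter.tendsto_add_atTop_nat 1)
  have hub : ∀ n : ℕ, deriv f x ≤ -γ + S (n+1) := by
    intro n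
    have := key2 n
    have h2 := hHS (n+1)
    linarith
  have hlb : ∀ n : ℕ, -γ + S (n+1) - 1/((n:ℝ)+1) ≤ deriv f x := by
    intro n
    have h1 := key1 n
    have h2 := hHS (n+1)
    have h3 : (harmonic (n+1) : ℝ) = (harmonic n : ℝ) + 1/((n:ℝ)+1) := by
      rw [harmonic_succ]
      push_cast
      ring
    linarith
  apply le_antisymm
  · exact ge_of_tendsto (tendsto_const_nhds.add hlimS) (Filter.Eventually.of_forall hub)
  · have hlim2 : Filter.Tendsto (fun n : ℕ => -γ + S (n+1) - 1/((n:ℝ)+1)) Filter.atTop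
        (𝓝 (-γ + (∑' n : ℕ, (1/((n:ℝ)+1) - 1/((n:ℝ)+x))) - 0)) :=
      (tendsto_const_nhds.add hlimS).sub tendsto_one_div_add_atTop_nhds_zero_nat
    rw [sub_zero] at hlim2
    exact le_of_tendsto hlim2 (Filter.Eventually.of_forall hlb)

lemma gamma_identity {z : ℂ} (hz : 0 < z.re) :
    deriv Complex.Gamma z = Complex.Gamma z * psiF z := by
  have hΓdiff : DifferentiableOn ℂ Complex.Gamma U := fun w hw =>
    (Complex.differentiableAt_Gamma w (zne hw)).differentiableWithinAt
  have hΓan : AnalyticOnNhd ℂ Complex.Gamma U := hΓdiff.analyticOnNhd isOpenU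
  have hΓ'an : AnalyticOnNhd ℂ (deriv Complex.Gamma) U := hΓan.deriv
  have hg : AnalyticOnNhd ℂ (fun w => deriv Complex.Gamma w - Complex.Gamma w * psiF w) U :=
    hΓ'an.sub (hΓan.mul analyticPsiF)
  have hpre : IsPreconnected U := (convex_halfSpace_re_gt 0).isPreconnected
  have h1 : (1:ℂ) ∈ U := by
    show (0:ℝ) < (1:ℂ).re
    simp
  have hreal : ∀ x : ℝ, 0 < x → x ≤ 1 →
      deriv Complex.Gamma (x:ℂ) = Complex.Gamma (x:ℂ) * psiF (x:ℂ) := by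
    intro x hx hx1
    have hxre : 0 < ((x:ℂ)).re := by simpa using hx
    have hC : DifferentiableAt ℂ Complex.Gamma (x:ℂ) :=
      Complex.differentiableAt_Gamma _ (zne hxre)
    have hR : DifferentiableAt ℝ Real.Gamma x := by
      refine Real.differentiableAt_Gamma (fun m => ?_)
      intro h
      have : (0:ℝ) ≤ m := m.cast_nonneg
      rw [h] at hx
      linarith
    have hcomp : HasDerivAt (fun y : ℝ => Complex.Gamma (y:ℂ)) (deriv Complex.Gamma (x:ℂ)) x :=
      hC.hasDerivAt.comp_ofReal
    have hcomp2 : HasDerivAt (fun y : ℝ => ((Real.Gamma y : ℝ):ℂ)) ((deriv Real.Gamma x : ℝ):ℂ) x :=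
      hR.hasDerivAt.ofReal_comp
    have hfun : (fun y : ℝ => Complex.Gamma (y:ℂ)) = (fun y : ℝ => ((Real.Gamma y : ℝ):ℂ)) := by
      funext y
      exact Complex.Gamma_ofReal y
    rw [hfun] at hcomp
    have hderiv_eq : deriv Complex.Gamma (x:ℂ) = ((deriv Real.Gamma x : ℝ):ℂ) :=
      hcomp.unique hcomp2
    have hΓpos := Real.Gamma_pos_of_pos hx
    have hlog : deriv (fun y => Real.log (Real.Gamma y)) x
        = deriv Real.Gamma x / Real.Gamma x := deriv.log hR hΓpos.ne'
    have hsum := real_digamma hx hx1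
    have hpsi : psiF (x:ℂ) = ((-γ + ∑' n : ℕ, (1/((n:ℝ)+1) - 1/((n:ℝ)+x)) : ℝ):ℂ) := by
      rw [psiF, Complex.ofReal_add, Complex.ofReal_neg, Complex.ofReal_tsum]
      congr 1
      apply tsum_congr
      intro n
      rw [Fc]
      push_cast
      ring
    rw [hderiv_eq, Complex.Gamma_ofReal, hpsi, ← Complex.ofReal_mul]
    congr 1
    rw [← hsum, hlog]
    field_simp
  have h0 : Filter.Tendsto (fun n : ℕ => 1/((n:ℝ)+2)) Filter.atTop (𝓝 0) := by
    have h := (tendsto_one_div_add_atTop_nhds_zero_nat (𝕜 := ℝ)).comp (Filter.tendsto_add_atTop_nat 1)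
    have he : (fun n : ℕ => 1/((n:ℝ)+2))
        = ((fun m : ℕ => 1/((m:ℝ)+1)) ∘ (fun a : ℕ => a + 1)) := by
      funext n
      simp only [Function.comp_apply]
      push_cast
      ring_nf
    rw [he]
    exact h
  have hx1lim : Filter.Tendsto (fun n : ℕ => (1:ℝ) - 1/((n:ℝ)+2)) Filter.atTop (𝓝 1) := by
    simpa using tendsto_const_nhds.sub h0
  have hxC : Filter.Tendsto (fun n : ℕ => (((1:ℝ) - 1/((n:ℝ)+2) : ℝ):ℂ)) Filter.atTop
      (𝓝 (1:ℂ)) := by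
    have := (Complex.continuous_ofReal.tendsto 1).comp hx1lim
    simpa [Function.comp_def] using this
  have hseq : Filter.Tendsto (fun n : ℕ => (((1:ℝ) - 1/((n:ℝ)+2) : ℝ):ℂ)) Filter.atTop
      (𝓝[≠] (1:ℂ)) := by
    refine tendsto_nhdsWithin_of_tendsto_nhds_of_eventually_within _ hxC
      (Filter.Eventually.of_forall (fun n => ?_))
    refine Set.mem_compl_singleton_iff.mpr ?_
    intro h
    have h2 : (1:ℝ) - 1/((n:ℝ)+2) = 1 := by exact_mod_cast h
    have hn : (0:ℝ) ≤ n := n.cast_nonneg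
    have h3 : (0:ℝ) < 1/((n:ℝ)+2) := by positivity
    linarith
  have hfreq : ∃ᶠ w in 𝓝[≠] (1:ℂ),
      (fun w => deriv Complex.Gamma w - Complex.Gamma w * psiF w) w = 0 := by
    refine hseq.frequently (Filter.Frequently.of_forall (fun n => ?_))
    have hn : (0:ℝ) ≤ n := n.cast_nonneg
    have h3 : (0:ℝ) < 1/((n:ℝ)+2) := by positivity
    have h4 : 1/((n:ℝ)+2) ≤ 1/(0+2) := by
      apply one_div_le_one_div_of_le (by norm_num) (by linarith)
    have hxpos : 0 < (1:ℝ) - 1/((n:ℝ)+2) := by norm_num at h4 ⊢; linarith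
    have hxle : (1:ℝ) - 1/((n:ℝ)+2) ≤ 1 := by linarith
    have := hreal _ hxpos hxle
    simp only [sub_eq_zero]
    exact this
  have hzero := hg.eqOn_zero_of_preconnected_of_frequently_eq_zero hpre h1 hfreq
  have hz2 := hzero (show z ∈ U from hz)
  simp only [Pi.zero_apply, sub_eq_zero] at hz2
  exact hz2

lemma logderiv_re {z : ℂ} (hz : 0 < z.re) :
    (deriv Complex.Gamma z / Complex.Gamma z).re
      = -γ + ∑' n : ℕ, (1/((n:ℝ)+1) - ((n:ℝ)+z.re)/(((n:ℝ)+z.re)^2 + z.im^2)) := by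
  have hΓ : Complex.Gamma z ≠ 0 := Complex.Gamma_ne_zero (zne hz)
  have hdiv : deriv Complex.Gamma z / Complex.Gamma z = psiF z := by
    rw [gamma_identity hz]
    field_simp
  rw [hdiv, psiF, Complex.add_re, Complex.re_tsum (summable_Fc hz), Complex.neg_re,
    Complex.ofReal_re]
  congr 1
  apply tsum_congr
  intro n
  have hn : (0:ℝ) ≤ n := n.cast_nonneg
  have e1 : (1/((n:ℂ)+1)).re = 1/((n:ℝ)+1) := by
    rw [show ((n:ℂ)+1) = (((n:ℝ)+1 : ℝ):ℂ) by push_cast; ring]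
    rw [one_div, ← Complex.ofReal_inv, Complex.ofReal_re, one_div]
  have e2 : (1/((n:ℂ)+z)).re = ((n:ℝ)+z.re)/(((n:ℝ)+z.re)^2 + z.im^2) := by
    rw [one_div, Complex.inv_re, Complex.normSq_apply]
    simp only [Complex.add_re, Complex.add_im, Complex.natCast_re, Complex.natCast_im, zero_add]
    ring_nf
  rw [Fc, Complex.sub_re, e1, e2]

section RealEst

variable {x t : ℝ}

/-- the real part terms -/
def aa (x t : ℝ) (n : ℕ) : ℝ := 1/((n:ℝ)+1) - ((n:ℝ)+x)/(((n:ℝ)+x)^2+t^2)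

lemma Fc_re_xt (x t : ℝ) (hx : 0 < x) (n : ℕ) :
    (Fc n ((x:ℂ) + (t:ℂ)*Complex.I)).re = aa x t n := by
  have hn : (0:ℝ) ≤ n := n.cast_nonneg
  have e1 : (1/((n:ℂ)+1)).re = 1/((n:ℝ)+1) := by
    rw [show ((n:ℂ)+1) = (((n:ℝ)+1 : ℝ):ℂ) by push_cast; ring]
    rw [one_div, ← Complex.ofReal_inv, Complex.ofReal_re, one_div]
  have e2 : (1/((n:ℂ)+((x:ℂ) + (t:ℂ)*Complex.I))).re
      = ((n:ℝ)+x)/(((n:ℝ)+x)^2 + t^2) := by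
    rw [one_div, Complex.inv_re, Complex.normSq_apply]
    simp only [Complex.add_re, Complex.add_im, Complex.natCast_re, Complex.natCast_im,
      Complex.ofReal_re, Complex.ofReal_im, Complex.mul_re, Complex.mul_im,
      Complex.I_re, Complex.I_im, zero_add, mul_zero, mul_one, zero_mul, sub_zero, zero_sub,
      add_zero]
    ring_nf
  rw [Fc, Complex.sub_re, e1, e2, aa]

lemma summable_aa (hx : 1/2 ≤ x) : Summable (aa x t) := by
  have hx0 : (0:ℝ) < x := by linarith
  have hz : (0:ℝ) < ((x:ℂ) + (t:ℂ)*Complex.I).re := by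
    simpa using hx0
  exact ((summable_Fc hz).map Complex.reCLM Complex.reCLM.continuous).congr
    (fun n => Fc_re_xt x t hx0 n)

lemma special_value : ∑' n : ℕ, (1/((n:ℝ)+1) - 1/((n:ℝ)+(1/2:ℝ))) = -(2*Real.log 2) := by
  have h := real_digamma (x := 1/2) (by norm_num) (by norm_num)
  have hval : deriv (fun y => Real.log (Real.Gamma y)) (1/2:ℝ) = -γ - 2*Real.log 2 := by
    have hR : DifferentiableAt ℝ Real.Gamma (1/2:ℝ) :=
      Real.hasDerivAt_Gamma_one_half.differentiableAt
    have hlog := deriv.log hR (Real.Gamma_pos_of_pos (by norm_num : (0:ℝ) < 1/2)).ne'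
    rw [hlog, Real.hasDerivAt_Gamma_one_half.deriv, Real.Gamma_one_half_eq]
    have hπ : Real.sqrt Real.pi ≠ 0 := by
      have := Real.pi_pos
      positivity
    field_simp
    ring
  rw [hval] at h
  linarith

lemma tsum_aa_lower (hx : 1/2 ≤ x) : -(2*Real.log 2) ≤ ∑' n, aa x t n := by
  rw [← special_value]
  refine Summable.tsum_le_tsum (fun n => ?_) (summable_real (by norm_num)) (summable_aa hx)
  have hn : (0:ℝ) ≤ n := n.cast_nonneg
  have h1 : (0:ℝ) < (n:ℝ)+x := by linarith
  have h2 : ((n:ℝ)+x)/(((n:ℝ)+x)^2+t^2) ≤ 1/((n:ℝ)+(1/2:ℝ)) := by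
    rw [div_le_div_iff₀ (by positivity) (by linarith)]
    nlinarith [sq_nonneg t, mul_le_mul_of_nonneg_left
      (show (n:ℝ)+1/2 ≤ (n:ℝ)+x by linarith) h1.le]
  rw [aa]
  linarith

def Qf (x t : ℝ) (n : ℕ) : ℝ := ((n:ℝ)+x)^2+t^2
def Gf (x t : ℝ) (n : ℕ) : ℝ := ((n:ℝ)+x)/(Qf x t n)
def If_ (x t : ℝ) (n : ℕ) : ℝ := (1/2)*(Real.log (Qf x t (n+1)) - Real.log (Qf x t n))

lemma nx_pos (hx : 1/2 ≤ x) (n : ℕ) : (0:ℝ) < (n:ℝ)+x := by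
  have hn : (0:ℝ) ≤ n := n.cast_nonneg
  linarith

lemma Qf_pos (hx : 1/2 ≤ x) (n : ℕ) : 0 < Qf x t n := by
  have := nx_pos hx n
  rw [Qf]
  positivity

lemma Qf_eq (n : ℕ) : Qf x t n = ((n:ℝ)+x)^2+t^2 := rfl

lemma Qf_succ (n : ℕ) : Qf x t (n+1) = Qf x t n + (2*((n:ℝ)+x)+1) := by
  rw [Qf, Qf]
  push_cast
  ring

lemma Gf_nonneg (hx : 1/2 ≤ x) (n : ℕ) : 0 ≤ Gf x t n :=
  div_nonneg (nx_pos hx n).le (Qf_pos hx n).le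

lemma Gf_le_two (hx : 1/2 ≤ x) (n : ℕ) : Gf x t n ≤ 2 := by
  have h1 := nx_pos hx n
  have h2 := Qf_pos (t := t) hx n
  rw [Gf, div_le_iff₀ h2, Qf_eq]
  nlinarith [sq_nonneg t, mul_nonneg h1.le (show (0:ℝ) ≤ 2*((n:ℝ)+x)-1 by
    have hn : (0:ℝ) ≤ n := n.cast_nonneg
    linarith)]

lemma Qf_inv_le (hx : 1/2 ≤ x) (n : ℕ) :
    1/Qf x t n ≤ 3*(1/((n:ℝ)+x) - 1/(((n+1:ℕ):ℝ)+x)) := by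
  have h1 := nx_pos hx n
  have h2 := nx_pos hx (n+1)
  have hn : (0:ℝ) ≤ n := n.cast_nonneg
  have h2' : ((n+1:ℕ):ℝ) + x = (n:ℝ)+1+x := by push_cast; ring
  rw [h2'] at h2 ⊢
  have heq : 1/((n:ℝ)+x) - 1/((n:ℝ)+1+x) = 1/(((n:ℝ)+x)*((n:ℝ)+1+x)) := by
    rw [div_sub_div _ _ (ne_of_gt h1) (ne_of_gt h2)]
    congr 1
    ring
  rw [heq, mul_one_div, div_le_div_iff₀ (Qf_pos hx n) (by positivity), Qf_eq]
  nlinarith [sq_nonneg t, mul_le_mul_of_nonneg_left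
    (show (n:ℝ)+1+x ≤ 3*((n:ℝ)+x) by linarith) h1.le]

lemma sumQf (hx : 1/2 ≤ x) (N : ℕ) : ∑ n ∈ Finset.range N, 1/Qf x t n ≤ 6 := by
  have hx0 : (0:ℝ) < x := by linarith
  have hN := nx_pos hx N
  have htel : ∑ n ∈ Finset.range N, (1/(((n:ℕ):ℝ)+x) - 1/(((n+1:ℕ):ℝ)+x))
      = 1/(((0:ℕ):ℝ)+x) - 1/((N:ℝ)+x) :=
    Finset.sum_range_sub' (fun m : ℕ => 1/((m:ℝ)+x)) N
  have hNpos : 0 < 1/((N:ℝ)+x) := by positivity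
  have h0 : 1/(((0:ℕ):ℝ)+x) ≤ 2 := by
    simp only [Nat.cast_zero, zero_add]
    rw [div_le_iff₀ hx0]
    linarith
  calc ∑ n ∈ Finset.range N, 1/Qf x t n
      ≤ ∑ n ∈ Finset.range N, 3*(1/((n:ℝ)+x) - 1/(((n+1:ℕ):ℝ)+x)) :=
        Finset.sum_le_sum (fun n _ => Qf_inv_le hx n)
    _ = 3*(1/(((0:ℕ):ℝ)+x) - 1/((N:ℝ)+x)) := by rw [← Finset.mul_sum, htel]
    _ ≤ 6 := by linarith

lemma sumQf' (hx : 1/2 ≤ x) (N : ℕ) : ∑ n ∈ Finset.range N, 1/Qf x t (n+1) ≤ 6 := by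
  have hx0 : (0:ℝ) < x := by linarith
  have hN := nx_pos hx (N+1)
  have htel : ∑ n ∈ Finset.range N, (1/(((n+1:ℕ):ℝ)+x) - 1/(((n+1+1:ℕ):ℝ)+x))
      = 1/(((0+1:ℕ):ℝ)+x) - 1/(((N+1:ℕ):ℝ)+x) :=
    Finset.sum_range_sub' (fun m : ℕ => 1/(((m+1:ℕ):ℝ)+x)) N
  have hNpos : 0 < 1/(((N+1:ℕ):ℝ)+x) := by positivity
  have h0 : 1/(((0+1:ℕ):ℝ)+x) ≤ 2 := by
    rw [show ((0+1:ℕ):ℝ) = 1 by norm_num]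
    rw [div_le_iff₀ (by linarith)]
    linarith
  calc ∑ n ∈ Finset.range N, 1/Qf x t (n+1)
      ≤ ∑ n ∈ Finset.range N, 3*(1/(((n+1:ℕ):ℝ)+x) - 1/(((n+1+1:ℕ):ℝ)+x)) :=
        Finset.sum_le_sum (fun n _ => Qf_inv_le hx (n+1))
    _ = 3*(1/(((0+1:ℕ):ℝ)+x) - 1/(((N+1:ℕ):ℝ)+x)) := by rw [← Finset.mul_sum, htel]
    _ ≤ 6 := by linarith

lemma If_ub (hx : 1/2 ≤ x) (n : ℕ) :
    If_ x t n ≤ Gf x t n + (1/2)*(1/Qf x t n) := by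
  have hp1 := Qf_pos (t := t) hx n
  have hp2 := Qf_pos (t := t) hx (n+1)
  have h2 : Real.log (Qf x t (n+1)/Qf x t n) ≤ Qf x t (n+1)/Qf x t n - 1 :=
    Real.log_le_sub_one_of_pos (div_pos hp2 hp1)
  have h3 : Qf x t (n+1)/Qf x t n - 1 = (2*((n:ℝ)+x)+1)/Qf x t n := by
    rw [div_sub_one hp1.ne', Qf_succ]
    ring_nf
  have h4 : (1/2)*((2*((n:ℝ)+x)+1)/Qf x t n) = Gf x t n + (1/2)*(1/Qf x t n) := by
    rw [Gf]
    field_simp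
  rw [If_, show Real.log (Qf x t (n+1)) - Real.log (Qf x t n)
    = Real.log (Qf x t (n+1) / Qf x t n) from (Real.log_div hp2.ne' hp1.ne').symm]
  linarith [h2, h3, h4]

lemma If_lb (hx : 1/2 ≤ x) (n : ℕ) :
    Gf x t (n+1) - (1/2)*(1/Qf x t (n+1)) ≤ If_ x t n := by
  have hp1 := Qf_pos (t := t) hx n
  have hp2 := Qf_pos (t := t) hx (n+1)
  have h2 : Real.log (Qf x t n/Qf x t (n+1)) ≤ Qf x t n/Qf x t (n+1) - 1 :=
    Real.log_le_sub_one_of_pos (div_pos hp1 hp2)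
  have h3 : Qf x t n/Qf x t (n+1) - 1 = -((2*((n:ℝ)+x)+1)/Qf x t (n+1)) := by
    rw [div_sub_one hp2.ne', Qf_succ]
    ring_nf
  have h4 : (1/2)*((2*((n:ℝ)+x)+1)/Qf x t (n+1))
      = Gf x t (n+1) - (1/2)*(1/Qf x t (n+1)) := by
    rw [Gf]
    rw [show ((n+1:ℕ):ℝ) = (n:ℝ)+1 by push_cast; ring]
    field_simp
    ring
  rw [If_, show Real.log (Qf x t (n+1)) - Real.log (Qf x t n)
    = -(Real.log (Qf x t n / Qf x t (n+1))) by
      rw [Real.log_div hp1.ne' hp2.ne']; ring]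
  linarith [h2, h3, h4]

lemma Gf_diff (hx : 1/2 ≤ x) (n : ℕ) : Gf x t (n+1) - Gf x t n
    = (t^2 - ((n:ℝ)+x)*((n:ℝ)+1+x))/(Qf x t n * Qf x t (n+1)) := by
  have hp1 := Qf_pos (t := t) hx n
  have hp2 := Qf_pos (t := t) hx (n+1)
  rw [Gf, Gf, div_sub_div _ _ hp2.ne' hp1.ne',
    div_eq_div_iff (by positivity) (by positivity)]
  simp only [Qf_eq]
  push_cast
  ring

lemma maxsum (hx : 1/2 ≤ x) (N : ℕ) :
    ∑ n ∈ Finset.range N, max (Gf x t (n+1) - Gf x t n) 0 ≤ 2 := by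
  have hex : ∃ m : ℕ, t^2 ≤ ((m:ℝ)+x)*((m:ℝ)+1+x) := by
    refine ⟨⌈t^2⌉₊, ?_⟩
    have h1 : t^2 ≤ (⌈t^2⌉₊ : ℝ) := Nat.le_ceil _
    have h2 : (0:ℝ) ≤ (⌈t^2⌉₊ : ℝ) := Nat.cast_nonneg _
    nlinarith
  set K := Nat.find hex with hKdef
  have hKle : ∀ n, K ≤ n → Gf x t (n+1) - Gf x t n ≤ 0 := by
    intro n hn
    have h1 : t^2 ≤ ((K:ℝ)+x)*((K:ℝ)+1+x) := Nat.find_spec hex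
    have h2 : (K:ℝ) ≤ (n:ℝ) := Nat.cast_le.mpr hn
    have hK0 : (0:ℝ) ≤ (K:ℝ) := Nat.cast_nonneg _
    have h3 : t^2 ≤ ((n:ℝ)+x)*((n:ℝ)+1+x) := by nlinarith
    rw [Gf_diff hx n]
    apply div_nonpos_of_nonpos_of_nonneg
    · linarith
    · exact (mul_pos (Qf_pos hx n) (Qf_pos hx (n+1))).le
  have hKgt : ∀ n, n < K → 0 ≤ Gf x t (n+1) - Gf x t n := by
    intro n hn
    have h1 : ¬ (t^2 ≤ ((n:ℝ)+x)*((n:ℝ)+1+x)) := Nat.find_min hex hn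
    push_neg at h1
    rw [Gf_diff hx n]
    apply div_nonneg
    · linarith
    · exact (mul_pos (Qf_pos hx n) (Qf_pos hx (n+1))).le
  have hmaxsum : ∀ M : ℕ, ∑ n ∈ Finset.range M, max (Gf x t (n+1) - Gf x t n) 0
      = Gf x t (min M K) - Gf x t 0 := by
    intro M
    induction M with
    | zero => simp
    | succ M ih =>
      rw [Finset.sum_range_succ, ih]
      rcases lt_or_ge M K with h | h
      · rw [max_eq_left (hKgt M h), min_eq_left (Nat.succ_le_of_lt h), min_eq_left (by omega)]
        ring
      · rw [max_eq_right (hKle M h), min_eq_right h, min_eq_right (by omega)]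
        ring
  rw [hmaxsum N]
  have h1 := Gf_le_two (t := t) hx (min N K)
  have h2 := Gf_nonneg (t := t) hx 0
  linarith

lemma var_sum (hx : 1/2 ≤ x) (N : ℕ) :
    ∑ n ∈ Finset.range N, |Gf x t n - Gf x t (n+1)| ≤ 6 := by
  have habs : ∀ n, |Gf x t n - Gf x t (n+1)|
      = (Gf x t n - Gf x t (n+1)) + 2*max (Gf x t (n+1) - Gf x t n) 0 := by
    intro n
    rcases le_total (Gf x t (n+1)) (Gf x t n) with h | h
    · rw [_root_.abs_of_nonneg (by linarith), max_eq_right (by linarith)]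
      ring
    · rw [_root_.abs_of_nonpos (by linarith), max_eq_left (by linarith)]
      ring
  have htel2 : ∑ n ∈ Finset.range N, (Gf x t n - Gf x t (n+1))
      = Gf x t 0 - Gf x t N := Finset.sum_range_sub' (Gf x t) N
  calc ∑ n ∈ Finset.range N, |Gf x t n - Gf x t (n+1)|
      = ∑ n ∈ Finset.range N, ((Gf x t n - Gf x t (n+1))
          + 2*max (Gf x t (n+1) - Gf x t n) 0) :=
        Finset.sum_congr rfl (fun n _ => habs n)
    _ = (Gf x t 0 - Gf x t N)
        + 2*(∑ n ∈ Finset.range N, max (Gf x t (n+1) - Gf x t n) 0) := by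
        rw [Finset.sum_add_distrib, htel2, ← Finset.mul_sum]
    _ ≤ 6 := by
        have h1 := maxsum (t := t) hx N
        have h2 := Gf_le_two (t := t) hx 0
        have h3 := Gf_nonneg (t := t) hx N
        have h4 : (0:ℝ) ≤ ∑ n ∈ Finset.range N, max (Gf x t (n+1) - Gf x t n) 0 :=
          Finset.sum_nonneg (fun n _ => le_max_right _ _)
        linarith

def pf (n : ℕ) : ℝ := 1/((n:ℝ)+1) - (Real.log ((n:ℝ)+2) - Real.log ((n:ℝ)+1))

lemma pf_nonneg (n : ℕ) : 0 ≤ pf n := by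
  have hn : (0:ℝ) ≤ n := n.cast_nonneg
  have h1 : Real.log ((n:ℝ)+2) - Real.log ((n:ℝ)+1) = Real.log (((n:ℝ)+2)/((n:ℝ)+1)) :=
    (Real.log_div (by linarith) (by linarith)).symm
  have h2 : Real.log (((n:ℝ)+2)/((n:ℝ)+1)) ≤ ((n:ℝ)+2)/((n:ℝ)+1) - 1 :=
    Real.log_le_sub_one_of_pos (by positivity)
  have h3 : ((n:ℝ)+2)/((n:ℝ)+1) - 1 = 1/((n:ℝ)+1) := by
    rw [div_sub_one (by linarith : ((n:ℝ)+1) ≠ 0)]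
    congr 1
    ring
  rw [pf, h1]
  linarith

lemma pf_le (n : ℕ) : pf n ≤ 1/((n:ℝ)+1) - 1/((n:ℝ)+2) := by
  have hn : (0:ℝ) ≤ n := n.cast_nonneg
  have h1 : Real.log ((n:ℝ)+1) - Real.log ((n:ℝ)+2) = Real.log (((n:ℝ)+1)/((n:ℝ)+2)) :=
    (Real.log_div (by linarith) (by linarith)).symm
  have h2 : Real.log (((n:ℝ)+1)/((n:ℝ)+2)) ≤ ((n:ℝ)+1)/((n:ℝ)+2) - 1 :=
    Real.log_le_sub_one_of_pos (by positivity)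
  have h3 : ((n:ℝ)+1)/((n:ℝ)+2) - 1 = -(1/((n:ℝ)+2)) := by
    rw [div_sub_one (by linarith : ((n:ℝ)+2) ≠ 0)]
    rw [neg_div ((n:ℝ)+2) 1|>.symm]
    congr 1
    ring
  rw [pf]
  linarith

lemma sum_pf (N : ℕ) : ∑ n ∈ Finset.range N, pf n ≤ 1 := by
  have htel : ∑ n ∈ Finset.range N, (1/(((n:ℕ):ℝ)+1) - 1/(((n+1:ℕ):ℝ)+1))
      = 1/(((0:ℕ):ℝ)+1) - 1/((N:ℝ)+1) :=
    Finset.sum_range_sub' (fun m : ℕ => 1/((m:ℝ)+1)) N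
  have hN : (0:ℝ) < 1/((N:ℝ)+1) := by positivity
  have hstep : ∀ n : ℕ, pf n ≤ 1/((n:ℝ)+1) - 1/(((n+1:ℕ):ℝ)+1) := by
    intro n
    have := pf_le n
    rw [show ((n+1:ℕ):ℝ)+1 = (n:ℝ)+2 by push_cast; ring]
    exact this
  calc ∑ n ∈ Finset.range N, pf n
      ≤ ∑ n ∈ Finset.range N, (1/((n:ℝ)+1) - 1/(((n+1:ℕ):ℝ)+1)) :=
        Finset.sum_le_sum (fun n _ => hstep n)
    _ = 1/(((0:ℕ):ℝ)+1) - 1/((N:ℝ)+1) := htel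
    _ ≤ 1 := by norm_num; linarith

def cf (x t : ℝ) (n : ℕ) : ℝ :=
  (Real.log ((n:ℝ)+2) - Real.log ((n:ℝ)+1)) - If_ x t n

def hhf (x t : ℝ) (m : ℕ) : ℝ := Real.log ((m:ℝ)+1) - (1/2)*Real.log (Qf x t m)

lemma cf_eq (x t : ℝ) (n : ℕ) : cf x t n = hhf x t (n+1) - hhf x t n := by
  rw [cf, hhf, hhf, If_]
  rw [show ((n+1:ℕ):ℝ)+1 = (n:ℝ)+2 by push_cast; ring]
  ring

lemma sum_cf (x t : ℝ) (N : ℕ) :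
    ∑ n ∈ Finset.range N, cf x t n = hhf x t N - hhf x t 0 := by
  calc ∑ n ∈ Finset.range N, cf x t n
      = ∑ n ∈ Finset.range N, (hhf x t (n+1) - hhf x t n) :=
        Finset.sum_congr rfl (fun n _ => cf_eq x t n)
    _ = hhf x t N - hhf x t 0 := Finset.sum_range_sub _ N

lemma hhf_zero (x t : ℝ) : hhf x t 0 = -((1/2)*Real.log (x^2+t^2)) := by
  rw [hhf, Qf_eq]
  norm_num

lemma hhf_lim (hx : 1/2 ≤ x) : Filter.Tendsto (hhf x t) Filter.atTop (𝓝 0) := by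
  have hratio : ∀ N : ℕ, Qf x t N / ((N:ℝ)+1)^2
      = (((N:ℝ)+x)/((N:ℝ)+1))^2 + (t/((N:ℝ)+1))^2 := by
    intro N
    have hN : (0:ℝ) < (N:ℝ)+1 := by positivity
    rw [Qf_eq]
    field_simp
  have hA : Filter.Tendsto (fun N : ℕ => ((N:ℝ)+x)/((N:ℝ)+1)) Filter.atTop (𝓝 1) := by
    have he : ∀ N : ℕ, ((N:ℝ)+x)/((N:ℝ)+1) = 1 + (x-1)*(1/((N:ℝ)+1)) := by
      intro N
      have hN : (0:ℝ) < (N:ℝ)+1 := by positivity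
      field_simp
      ring
    rw [funext he]
    have h1 := (tendsto_one_div_add_atTop_nhds_zero_nat).const_mul (x-1)
    have h2 := Filter.Tendsto.add
      (tendsto_const_nhds : Filter.Tendsto (fun _ : ℕ => (1:ℝ)) Filter.atTop (𝓝 1)) h1
    simpa using h2
  have hB : Filter.Tendsto (fun N : ℕ => t/((N:ℝ)+1)) Filter.atTop (𝓝 0) := by
    have h1 := (tendsto_one_div_add_atTop_nhds_zero_nat).const_mul t
    have he : ∀ N : ℕ, t/((N:ℝ)+1) = t * (1/((N:ℝ)+1)) := by
      intro N
      ring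
    rw [funext he]
    simpa using h1
  have hR : Filter.Tendsto (fun N : ℕ => Qf x t N / ((N:ℝ)+1)^2) Filter.atTop (𝓝 1) := by
    rw [funext hratio]
    have h1 := (hA.pow 2).add (hB.pow 2)
    norm_num at h1
    exact h1
  have hlog : Filter.Tendsto (fun N : ℕ => Real.log (Qf x t N / ((N:ℝ)+1)^2)) Filter.atTop
      (𝓝 0) := by
    have hcont := (Real.continuousAt_log (by norm_num : (1:ℝ) ≠ 0)).tendsto
    have h1 := hcont.comp hR
    simp only [Real.log_one] at h1
    simpa [Function.comp_def] using h1
  have hhid : ∀ N : ℕ, hhf x t N = -(1/2)*Real.log (Qf x t N / ((N:ℝ)+1)^2) := by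
    intro N
    have hN : (0:ℝ) < (N:ℝ)+1 := by positivity
    have h1 : Real.log (Qf x t N / ((N:ℝ)+1)^2)
        = Real.log (Qf x t N) - Real.log (((N:ℝ)+1)^2) :=
      Real.log_div (Qf_pos hx N).ne' (by positivity)
    have h2 : Real.log (((N:ℝ)+1)^2) = 2*Real.log ((N:ℝ)+1) := by
      rw [Real.log_pow]
      push_cast
      ring
    rw [hhf, h1, h2]
    ring
  rw [funext hhid]
  have h1 := hlog.const_mul (-(1/2) : ℝ)
  simpa using h1

lemma tsum_aa_est (hx : 1/2 ≤ x) :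
    |∑' n, aa x t n - (1/2)*Real.log (x^2+t^2)| ≤ 13 := by
  have hA : Filter.Tendsto (fun N => ∑ n ∈ Finset.range N, aa x t n) Filter.atTop
      (𝓝 (∑' n, aa x t n)) := (summable_aa hx).hasSum.tendsto_sum_nat
  have hC : Filter.Tendsto (fun N => ∑ n ∈ Finset.range N, cf x t n) Filter.atTop
      (𝓝 ((1/2)*Real.log (x^2+t^2))) := by
    have he : ∀ N, ∑ n ∈ Finset.range N, cf x t n
        = hhf x t N + (1/2)*Real.log (x^2+t^2) := by
      intro N
      rw [sum_cf, hhf_zero]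
      ring
    rw [funext he]
    have h1 := (hhf_lim (t := t) hx).add
      (tendsto_const_nhds : Filter.Tendsto (fun _ : ℕ => (1/2)*Real.log (x^2+t^2))
        Filter.atTop (𝓝 ((1/2)*Real.log (x^2+t^2))))
    simpa using h1
  have hbound : ∀ N, |∑ n ∈ Finset.range N, aa x t n - ∑ n ∈ Finset.range N, cf x t n|
      ≤ 13 := by
    intro N
    have hac : ∀ n : ℕ, aa x t n - cf x t n = pf n - (Gf x t n - If_ x t n) := by
      intro n
      rw [aa, cf, pf, Gf, Qf_eq]
      ring
    have he_ub : ∀ n, Gf x t n - If_ x t n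
        ≤ |Gf x t n - Gf x t (n+1)| + (1/2)*(1/Qf x t n) + (1/2)*(1/Qf x t (n+1)) := by
      intro n
      have h1 := If_lb (t := t) hx n
      have h2 := le_abs_self (Gf x t n - Gf x t (n+1))
      have h3 : 0 < 1/Qf x t n := by
        have := Qf_pos (t := t) hx n
        positivity
      linarith
    have he_lb : ∀ n, -(|Gf x t n - Gf x t (n+1)| + (1/2)*(1/Qf x t n)
        + (1/2)*(1/Qf x t (n+1))) ≤ Gf x t n - If_ x t n := by
      intro n
      have h1 := If_ub (t := t) hx n
      have h2 := abs_nonneg (Gf x t n - Gf x t (n+1))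
      have h3 : 0 < 1/Qf x t (n+1) := by
        have := Qf_pos (t := t) hx (n+1)
        positivity
      linarith
    have habs_e : ∀ n, |Gf x t n - If_ x t n|
        ≤ |Gf x t n - Gf x t (n+1)| + (1/2)*(1/Qf x t n) + (1/2)*(1/Qf x t (n+1)) :=
      fun n => abs_le.mpr ⟨he_lb n, he_ub n⟩
    have hsum_e : ∑ n ∈ Finset.range N, |Gf x t n - If_ x t n| ≤ 12 := by
      calc ∑ n ∈ Finset.range N, |Gf x t n - If_ x t n|
          ≤ ∑ n ∈ Finset.range N, (|Gf x t n - Gf x t (n+1)| + (1/2)*(1/Qf x t n)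
              + (1/2)*(1/Qf x t (n+1))) :=
            Finset.sum_le_sum (fun n _ => habs_e n)
        _ = (∑ n ∈ Finset.range N, |Gf x t n - Gf x t (n+1)|)
            + (1/2)*(∑ n ∈ Finset.range N, 1/Qf x t n)
            + (1/2)*(∑ n ∈ Finset.range N, 1/Qf x t (n+1)) := by
            rw [Finset.sum_add_distrib, Finset.sum_add_distrib, ← Finset.mul_sum,
              ← Finset.mul_sum]
        _ ≤ 6 + (1/2)*6 + (1/2)*6 := by
            have h1 := var_sum (t := t) hx N
            have h2 := sumQf (t := t) hx N
            have h3 := sumQf' (t := t) hx N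
            have h4 : (0:ℝ) ≤ ∑ n ∈ Finset.range N, 1/Qf x t n :=
              Finset.sum_nonneg (fun n _ => by
                have := Qf_pos (t := t) hx n
                positivity)
            have h5 : (0:ℝ) ≤ ∑ n ∈ Finset.range N, 1/Qf x t (n+1) :=
              Finset.sum_nonneg (fun n _ => by
                have := Qf_pos (t := t) hx (n+1)
                positivity)
            linarith
        _ = 12 := by norm_num
    have hdiff : ∑ n ∈ Finset.range N, aa x t n - ∑ n ∈ Finset.range N, cf x t n
        = ∑ n ∈ Finset.range N, pf n - ∑ n ∈ Finset.range N, (Gf x t n - If_ x t n) := by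
      rw [← Finset.sum_sub_distrib, ← Finset.sum_sub_distrib]
      exact Finset.sum_congr rfl (fun n _ => hac n)
    rw [hdiff]
    have hps := sum_pf N
    have hp_nonneg : (0:ℝ) ≤ ∑ n ∈ Finset.range N, pf n :=
      Finset.sum_nonneg (fun n _ => pf_nonneg n)
    have he_abs : |∑ n ∈ Finset.range N, (Gf x t n - If_ x t n)| ≤ 12 :=
      (Finset.abs_sum_le_sum_abs _ _).trans hsum_e
    have h6 := abs_le.mp he_abs
    rw [abs_le]
    constructor <;> [linarith [h6.2]; linarith [h6.1]]
  have hDlim : Filter.Tendsto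
      (fun N => |∑ n ∈ Finset.range N, aa x t n - ∑ n ∈ Finset.range N, cf x t n|)
      Filter.atTop (𝓝 |∑' n, aa x t n - (1/2)*Real.log (x^2+t^2)|) :=
    (_root_.continuous_abs.tendsto _).comp (hA.sub hC)
  exact le_of_tendsto hDlim (Filter.Eventually.of_forall hbound)

end RealEst

lemma central {z : ℂ} (hz : 1/2 ≤ z.re) :
    -γ - 2*Real.log 2 ≤ (deriv Complex.Gamma z / Complex.Gamma z).re ∧
    |(deriv Complex.Gamma z / Complex.Gamma z).re + γ - Real.log ‖z‖| ≤ 13 := by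
  have hz0 : 0 < z.re := by linarith
  have hre2 : (deriv Complex.Gamma z / Complex.Gamma z).re = -γ + ∑' n, aa z.re z.im n := by
    rw [logderiv_re hz0]
    rfl
  constructor
  · have h1 := tsum_aa_lower (t := z.im) hz
    rw [hre2]
    linarith
  · have h2 := tsum_aa_est (t := z.im) hz
    have hlogabs : Real.log ‖z‖ = (1/2)*Real.log (z.re^2 + z.im^2) := by
      rw [Complex.norm_def, Complex.normSq_apply,
        show z.re*z.re + z.im*z.im = z.re^2+z.im^2 by ring,
        Real.log_sqrt (by positivity)]
      ring
    rw [hre2, hlogabs,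
      show -γ + (∑' n, aa z.re z.im n) + γ - (1/2)*Real.log (z.re^2+z.im^2)
        = (∑' n, aa z.re z.im n) - (1/2)*Real.log (z.re^2+z.im^2) from by ring]
    exact h2

end Stmt8Aux

/- Statement 8: Corollary 6, `T(d,t) ≥ C₀⁻²` and `T(d,t) ≍ |2|d| + 1/2 + it|²`. -/
theorem stmt8 :
    (∀ (d : ℤ) (t : ℝ),
        ((4 * Real.pi * Real.exp Real.eulerMascheroniConstant) ^ 2)⁻¹ ≤ Tdt d t) ∧
    (∃ c₁ c₂ : ℝ, 0 < c₁ ∧ 0 < c₂ ∧ ∀ (d : ℤ) (t : ℝ),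
        c₁ * ‖zdt d t‖ ^ 2 ≤ Tdt d t ∧
        Tdt d t ≤ c₂ * ‖zdt d t‖ ^ 2) := by
  have hdabs : ∀ d : ℤ, (0:ℝ) ≤ ((|d| : ℤ) : ℝ) := by
    intro d
    exact_mod_cast abs_nonneg d
  have hzre : ∀ (d : ℤ) (t : ℝ), (zdt d t).re = 2*((|d|:ℤ):ℝ) + 1/2 := by
    intro d t
    simp [zdt]
  have hre_half : ∀ (d : ℤ) (t : ℝ), 1/2 ≤ (zdt d t).re := by
    intro d t
    rw [hzre]
    have := hdabs d
    linarith
  set γ := Real.eulerMascheroniConstant with hγ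
  constructor
  · intro d t
    have h := (Stmt8Aux.central (hre_half d t)).1
    rw [Tdt]
    have heq : ((4 * Real.pi * Real.exp γ) ^ 2)⁻¹
        = Real.exp (2*(-γ - 2*Real.log 2) - 2*Real.log Real.pi) := by
      rw [← Real.exp_log (show (0:ℝ) < (4*Real.pi*Real.exp γ)^2 by positivity),
        ← Real.exp_neg]
      congr 1
      rw [Real.log_pow, Real.log_mul (by positivity) (Real.exp_ne_zero _),
        Real.log_mul (by norm_num) Real.pi_ne_zero, Real.log_exp,
        show Real.log 4 = 2*Real.log 2 by
          rw [show (4:ℝ) = 2^2 by norm_num, Real.log_pow]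
          push_cast
          ring]
      push_cast
      ring
    rw [heq]
    apply Real.exp_le_exp.mpr
    linarith
  · refine ⟨Real.exp (-26 - 2*γ - 2*Real.log Real.pi),
      Real.exp (26 - 2*γ - 2*Real.log Real.pi),
      Real.exp_pos _, Real.exp_pos _, ?_⟩
    intro d t
    have h := (Stmt8Aux.central (hre_half d t)).2
    have habs := abs_le.mp h
    have hzne : (zdt d t) ≠ 0 := by
      intro h0
      have h1 := hre_half d t
      rw [h0] at h1
      norm_num at h1
    have habs_pos : 0 < ‖zdt d t‖ := by
      rw [norm_pos_iff]
      exact hzne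
    have hlogid : ‖zdt d t‖^2 = Real.exp (2*Real.log (‖zdt d t‖)) := by
      rw [two_mul, Real.exp_add, Real.exp_log habs_pos]
      ring
    constructor
    · rw [Tdt, hlogid, ← Real.exp_add]
      apply Real.exp_le_exp.mpr
      linarith [habs.1]
    · rw [Tdt, hlogid, ← Real.exp_add]
      apply Real.exp_le_exp.mpr
      linarith [habs.2]
end
end
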